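/- arXiv:1806.05702 — 4 statements merged into one kernel-verified Lean document; each statement's English description precedes it below -/
import Mathlib

section
/- For 0 < H < 1, every x ∈ 𝔛^H satisfies the uniform modulus of continuity bound |x(t+h) − x(t)| ≤ 2^{1−H} ω_H(h) for all h ∈ [0,1) and t ∈ [0,1−h]. -/
open Filter Finset Set MeasureTheory ProbabilityTheory

noncomputable def e00 (t : ℝ) : ℝ := max (min t (1 - t)) 0

noncomputable def fs (m : ℕ) (k : ℤ) (t : ℝ) : ℝ :=
  (2 : ℝ) ^ (-(m : ℝ) / 2) * e00 ((2 : ℝ) ^ m * t - (k : ℝ))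

def IsSign (θ : ℕ → ℕ → ℝ) : Prop := ∀ m k, θ m k = 1 ∨ θ m k = -1

noncomputable def tlTerm (H : ℝ) (θ : ℕ → ℕ → ℝ) (m : ℕ) (t : ℝ) : ℝ :=
  (2 : ℝ) ^ ((m : ℝ) * (1 / 2 - H)) *
    ∑ k ∈ Finset.range (2 ^ m), θ m k * fs m (k : ℤ) t

noncomputable def sPartial (H : ℝ) (θ : ℕ → ℕ → ℝ) (n : ℕ) (t : ℝ) : ℝ :=
  ∑ m ∈ Finset.range n, tlTerm H θ m t

def MemX (H : ℝ) (x : ℝ → ℝ) : Prop :=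
  ∃ θ : ℕ → ℕ → ℝ, IsSign θ ∧ ∀ t : ℝ, x t = ∑' m : ℕ, tlTerm H θ m t

noncomputable def xTL (H : ℝ) (t : ℝ) : ℝ := ∑' m : ℕ, tlTerm H (fun _ _ => 1) m t

noncomputable def dyadicSum (p : ℝ) (x : ℝ → ℝ) (n : ℕ) (t : ℝ) : ℝ :=
  ∑ k ∈ Finset.range (2 ^ n),
    if (k : ℝ) / 2 ^ n ≤ t then |x (((k : ℝ) + 1) / 2 ^ n) - x ((k : ℝ) / 2 ^ n)| ^ p else 0

noncomputable def nuFloor (h : ℝ) : ℤ := ⌊-(Real.logb 2 h)⌋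

noncomputable def omegaH (H h : ℝ) : ℝ :=
  h * (2 : ℝ) ^ (((nuFloor h : ℝ) - 1) * (1 - H)) / ((2 : ℝ) ^ (1 - H) - 1) +
    (2 : ℝ) ^ ((1 - (nuFloor h : ℝ)) * H) / (3 * (1 - (2 : ℝ) ^ (-H)))

noncomputable def phiW (u : ℝ) : ℝ := min (Int.fract u) (1 - Int.fract u)

lemma e00_nonneg (u : ℝ) : 0 ≤ e00 u := le_max_right _ _

lemma e00_le_half (u : ℝ) : e00 u ≤ 1/2 := by
  unfold e00
  apply max_le _ (by norm_num)
  rcases le_total u (1/2 : ℝ) with h | h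
  · exact le_trans (min_le_left _ _) h
  · exact le_trans (min_le_right _ _) (by linarith)

lemma e00_zero_of_nonpos {u : ℝ} (h : u ≤ 0) : e00 u = 0 := by
  unfold e00; rw [max_eq_right]; exact min_le_of_left_le h

lemma e00_zero_of_one_le {u : ℝ} (h : 1 ≤ u) : e00 u = 0 := by
  unfold e00; rw [max_eq_right]; exact min_le_of_right_le (by linarith)

lemma e00_lip (a b : ℝ) : |e00 a - e00 b| ≤ |a - b| := by
  unfold e00
  refine le_trans (abs_max_sub_max_le_abs _ _ _) ?_
  refine le_trans (abs_min_sub_min_le_max _ _ _ _) ?_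
  apply max_le le_rfl
  rw [show (1:ℝ) - a - (1 - b) = -(a - b) by ring, abs_neg]

lemma phiW_nonneg (u : ℝ) : 0 ≤ phiW u := by
  have h1 := Int.fract_nonneg u
  have h2 := Int.fract_lt_one u
  unfold phiW; simp only [le_min_iff]; constructor <;> linarith

lemma phiW_le_half (u : ℝ) : phiW u ≤ 1/2 := by
  unfold phiW
  rcases le_total (Int.fract u) (1 - Int.fract u) with h | h
  · rw [min_eq_left h]; linarith
  · rw [min_eq_right h]; linarith

lemma e00_fract (u : ℝ) : e00 (Int.fract u) = phiW u := by
  have h1 := Int.fract_nonneg u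
  have h2 := Int.fract_lt_one u
  unfold e00 phiW
  rw [max_eq_left]
  rcases le_total (Int.fract u) (1 - Int.fract u) with h | h
  · rw [min_eq_left h]; linarith
  · rw [min_eq_right h]; linarith

lemma phiW_chain (u : ℝ) : phiW u + phiW (2*u) / 2 ≤ 1/2 := by
  have hf : Int.fract (2*u) = Int.fract (2 * Int.fract u) := by
    rw [Int.fract_eq_fract]
    exact ⟨2 * ⌊u⌋, by rw [Int.fract]; push_cast; ring⟩
  have h1 := Int.fract_nonneg u
  have h2 := Int.fract_lt_one u
  set x := Int.fract u with hxdef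
  have hphi : phiW u = min x (1 - x) := rfl
  rcases lt_or_ge (2*x) 1 with hd | hd
  · have h2x : Int.fract (2*x) = 2*x := Int.fract_eq_self.2 ⟨by linarith, hd⟩
    have hp2 : phiW (2*u) = min (2*x) (1 - 2*x) := by unfold phiW; rw [hf, h2x]
    rw [hphi, hp2]
    have e1 : min x (1-x) ≤ x := min_le_left _ _
    have e2 : min (2*x) (1-2*x) ≤ 1 - 2*x := min_le_right _ _
    linarith
  · have h2x : Int.fract (2*x) = 2*x - 1 := by
      have hself : Int.fract (2*x - 1) = 2*x - 1 :=
        Int.fract_eq_self.2 ⟨by linarith, by linarith⟩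
      calc Int.fract (2*x) = Int.fract (2*x - 1) := by
            rw [Int.fract_eq_fract]; exact ⟨1, by norm_num⟩
        _ = 2*x - 1 := hself
    have hp2 : phiW (2*u) = min (2*x - 1) (1 - (2*x - 1)) := by unfold phiW; rw [hf, h2x]
    rw [hphi, hp2]
    have e1 : min x (1-x) ≤ 1 - x := min_le_right _ _
    have e2 : min (2*x-1) (1-(2*x-1)) ≤ 2*x - 1 := min_le_left _ _
    linarith

lemma e00_term_zero {u : ℝ} {k : ℕ} (hk : (k:ℤ) ≠ ⌊u⌋) : e00 (u - k) = 0 := by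
  rcases lt_or_gt_of_ne hk with h | h
  · apply e00_zero_of_one_le
    have : (k:ℝ) ≤ (⌊u⌋:ℝ) - 1 := by exact_mod_cast Int.le_sub_one_of_lt h
    have h2 : (⌊u⌋:ℝ) ≤ u := Int.floor_le u
    linarith
  · apply e00_zero_of_nonpos
    have : (⌊u⌋:ℝ) + 1 ≤ (k:ℝ) := by exact_mod_cast Int.add_one_le_of_lt h
    have h2 : u < (⌊u⌋:ℝ) + 1 := Int.lt_floor_add_one u
    linarith

lemma inner_abs_le (θ : ℕ → ℝ) (hθ : ∀ k, |θ k| ≤ 1) (N : ℕ) (u : ℝ) :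
    |∑ k ∈ Finset.range N, θ k * e00 (u - k)| ≤ phiW u := by
  by_cases h0 : 0 ≤ ⌊u⌋ ∧ ⌊u⌋ < (N:ℤ)
  · obtain ⟨h1, h2⟩ := h0
    set k0 : ℕ := ⌊u⌋.toNat with hk0
    have hk0' : (k0:ℤ) = ⌊u⌋ := Int.toNat_of_nonneg h1
    have hmem : k0 ∈ Finset.range N := by
      rw [Finset.mem_range]; exact_mod_cast hk0' ▸ h2
    have hsum : ∑ k ∈ Finset.range N, θ k * e00 (u - k) = θ k0 * e00 (u - k0) := by
      apply Finset.sum_eq_single_of_mem k0 hmem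
      intro k _ hkne
      have : (k:ℤ) ≠ ⌊u⌋ := by
        intro hc; exact hkne (by omega)
      rw [e00_term_zero this, mul_zero]
    rw [hsum, abs_mul]
    have he : u - k0 = Int.fract u := by
      rw [Int.fract]; congr 1; exact_mod_cast hk0'
    rw [he, e00_fract]
    calc |θ k0| * |phiW u| ≤ 1 * |phiW u| :=
          mul_le_mul_of_nonneg_right (hθ k0) (abs_nonneg _)
      _ = phiW u := by rw [one_mul, abs_of_nonneg (phiW_nonneg u)]
  · have hsum : ∑ k ∈ Finset.range N, θ k * e00 (u - k) = 0 := by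
      apply Finset.sum_eq_zero
      intro k hk
      have : (k:ℤ) ≠ ⌊u⌋ := by
        intro hc
        apply h0
        constructor
        · rw [← hc]; exact_mod_cast Nat.zero_le k
        · rw [← hc]; exact_mod_cast Finset.mem_range.1 hk
      rw [e00_term_zero this, mul_zero]
    rw [hsum, abs_zero]; exact phiW_nonneg u

lemma e00_clamp (u : ℝ) (k : ℕ) :
    e00 (u - k) = e00 (min (max u (k:ℝ)) ((k:ℝ)+1) - k) := by
  rcases le_total u (k:ℝ) with h | h
  · rw [max_eq_right h, min_eq_left (by linarith), sub_self,
      e00_zero_of_nonpos (by linarith), e00_zero_of_nonpos le_rfl]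
  · rw [max_eq_left h]
    rcases le_total u ((k:ℝ)+1) with h2 | h2
    · rw [min_eq_left h2]
    · rw [min_eq_right h2, e00_zero_of_one_le (by linarith), e00_zero_of_one_le (by linarith)]

lemma clamp_step (b : ℝ) (N : ℕ) :
    min (max b 0) ((N:ℝ)+1) - min (max b 0) (N:ℝ) = min (max b (N:ℝ)) ((N:ℝ)+1) - N := by
  have hN : (0:ℝ) ≤ (N:ℝ) := Nat.cast_nonneg N
  rcases le_total b (N:ℝ) with h | h
  · have hb0 : max b 0 ≤ (N:ℝ) := max_le h hN
    rw [max_eq_right h, min_eq_left hb0, min_eq_left (le_trans hb0 (by linarith)),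
        min_eq_left (by linarith : (N:ℝ) ≤ (N:ℝ)+1)]
    ring
  · rw [max_eq_left h, max_eq_left (le_trans hN h), min_eq_right h]

lemma clamp_sum (a b : ℝ) (N : ℕ) :
    ∑ k ∈ Finset.range N, (min (max b (k:ℝ)) ((k:ℝ)+1) - min (max a (k:ℝ)) ((k:ℝ)+1))
      = (min (max b 0) (N:ℝ) - min (max a 0) (N:ℝ)) := by
  induction N with
  | zero =>
    simp [min_eq_right (le_max_right a 0), min_eq_right (le_max_right b 0)]
  | succ n ih =>
    rw [Finset.sum_range_succ, ih]
    have hb := clamp_step b n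
    have ha := clamp_step a n
    push_cast
    push_cast at hb ha
    linarith

lemma inner_lip (θ : ℕ → ℝ) (hθ : ∀ k, |θ k| ≤ 1) (N : ℕ) {a b : ℝ} (hab : a ≤ b) :
    |∑ k ∈ Finset.range N, θ k * e00 (b - k) - ∑ k ∈ Finset.range N, θ k * e00 (a - k)|
      ≤ b - a := by
  rw [← Finset.sum_sub_distrib]
  calc |∑ k ∈ Finset.range N, (θ k * e00 (b - k) - θ k * e00 (a - k))|
      ≤ ∑ k ∈ Finset.range N, |θ k * e00 (b - k) - θ k * e00 (a - k)| :=
        Finset.abs_sum_le_sum_abs _ _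
    _ ≤ ∑ k ∈ Finset.range N, (min (max b (k:ℝ)) ((k:ℝ)+1) - min (max a (k:ℝ)) ((k:ℝ)+1)) := by
        apply Finset.sum_le_sum
        intro k _
        rw [← mul_sub, abs_mul]
        have h1 : |e00 (b - k) - e00 (a - k)|
            ≤ min (max b (k:ℝ)) ((k:ℝ)+1) - min (max a (k:ℝ)) ((k:ℝ)+1) := by
          rw [e00_clamp b k, e00_clamp a k]
          refine le_trans (e00_lip _ _) ?_
          have hm : min (max a (k:ℝ)) ((k:ℝ)+1) ≤ min (max b (k:ℝ)) ((k:ℝ)+1) :=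
            min_le_min (max_le_max hab le_rfl) le_rfl
          rw [show min (max b (k:ℝ)) ((k:ℝ)+1) - k - (min (max a (k:ℝ)) ((k:ℝ)+1) - k)
            = min (max b (k:ℝ)) ((k:ℝ)+1) - min (max a (k:ℝ)) ((k:ℝ)+1) by ring]
          rw [abs_of_nonneg (by linarith)]
        calc |θ k| * |e00 (b - k) - e00 (a - k)| ≤ 1 * |e00 (b - k) - e00 (a - k)| :=
              mul_le_mul_of_nonneg_right (hθ k) (abs_nonneg _)
          _ = |e00 (b - k) - e00 (a - k)| := one_mul _
          _ ≤ _ := h1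
    _ = min (max b 0) (N:ℝ) - min (max a 0) (N:ℝ) := clamp_sum a b N
    _ ≤ b - a := by
        have h1 : |min (max b 0) (N:ℝ) - min (max a 0) (N:ℝ)| ≤ max |max b 0 - max a 0| |(N:ℝ) - N| :=
          abs_min_sub_min_le_max _ _ _ _
        have h2 : |max b 0 - max a 0| ≤ |b - a| := abs_max_sub_max_le_abs _ _ _
        have h3 : |(N:ℝ) - (N:ℝ)| = 0 := by simp
        rw [h3] at h1
        have h4 : max |max b 0 - max a 0| 0 = |max b 0 - max a 0| := max_eq_left (abs_nonneg _)
        rw [h4] at h1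
        have h5 : |b - a| = b - a := abs_of_nonneg (by linarith)
        have := le_trans h1 (le_trans h2 (le_of_eq h5))
        exact le_trans (le_abs_self _) this

lemma IsSign.abs_le {θ : ℕ → ℕ → ℝ} (hθ : IsSign θ) (m k : ℕ) : |θ m k| ≤ 1 := by
  rcases hθ m k with h | h <;> rw [h] <;> norm_num

lemma tlTerm_eq (H : ℝ) (θ : ℕ → ℕ → ℝ) (m : ℕ) (t : ℝ) :
    tlTerm H θ m t
      = (2:ℝ) ^ (-((m:ℝ) * H)) * ∑ k ∈ Finset.range (2 ^ m),
          θ m k * e00 ((2:ℝ) ^ m * t - (k:ℝ)) := by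
  unfold tlTerm fs
  have h1 : ∀ k ∈ Finset.range (2^m),
      θ m k * ((2:ℝ) ^ (-(m:ℝ)/2) * e00 ((2:ℝ)^m * t - ((k:ℤ):ℝ)))
        = (2:ℝ) ^ (-(m:ℝ)/2) * (θ m k * e00 ((2:ℝ)^m * t - (k:ℝ))) := by
    intro k _; push_cast; ring
  rw [Finset.sum_congr rfl h1, ← Finset.mul_sum, ← mul_assoc,
    ← Real.rpow_add (by norm_num : (0:ℝ) < 2)]
  congr 2
  ring

lemma rpow_neg_mul (H : ℝ) (m : ℕ) : (2:ℝ) ^ (-((m:ℝ) * H)) = ((2:ℝ) ^ (-H)) ^ m := by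
  rw [← Real.rpow_natCast ((2:ℝ) ^ (-H)) m, ← Real.rpow_mul (by norm_num : (0:ℝ) ≤ 2)]
  congr 1; ring

lemma rpow_pow_id (H : ℝ) (m : ℕ) :
    (2:ℝ) ^ (-((m:ℝ) * H)) * (2:ℝ) ^ m = ((2:ℝ) ^ (1 - H)) ^ m := by
  rw [← Real.rpow_natCast ((2:ℝ) ^ (1-H)) m, ← Real.rpow_mul (by norm_num : (0:ℝ) ≤ 2),
    ← Real.rpow_natCast (2:ℝ) m, ← Real.rpow_add (by norm_num : (0:ℝ) < 2)]
  congr 1; ring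

section chunk2
variable {H : ℝ} {θ : ℕ → ℕ → ℝ}

lemma tlTerm_abs_le (hθ : IsSign θ) (m : ℕ) (t : ℝ) :
    |tlTerm H θ m t| ≤ (2:ℝ) ^ (-((m:ℝ) * H)) * phiW ((2:ℝ) ^ m * t) := by
  rw [tlTerm_eq, abs_mul, abs_of_nonneg (Real.rpow_nonneg (by norm_num) _)]
  exact mul_le_mul_of_nonneg_left
    (inner_abs_le (fun k => θ m k) (fun k => hθ.abs_le m k) _ _)
    (Real.rpow_nonneg (by norm_num) _)

lemma tlTerm_lip (hθ : IsSign θ) (m : ℕ) (t h : ℝ) (hh : 0 ≤ h) :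
    |tlTerm H θ m (t + h) - tlTerm H θ m t|
      ≤ (2:ℝ) ^ (-((m:ℝ) * H)) * ((2:ℝ) ^ m * h) := by
  rw [tlTerm_eq, tlTerm_eq, ← mul_sub, abs_mul,
    abs_of_nonneg (Real.rpow_nonneg (by norm_num) _)]
  apply mul_le_mul_of_nonneg_left _ (Real.rpow_nonneg (by norm_num) _)
  have h2m : (0:ℝ) < 2 ^ m := by positivity
  have hab : (2:ℝ) ^ m * t ≤ (2:ℝ) ^ m * (t + h) := by nlinarith
  have := inner_lip (fun k => θ m k) (fun k => hθ.abs_le m k) (2^m) hab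
  calc |∑ k ∈ Finset.range (2^m), θ m k * e00 ((2:ℝ)^m * (t+h) - k)
        - ∑ k ∈ Finset.range (2^m), θ m k * e00 ((2:ℝ)^m * t - k)|
      ≤ (2:ℝ)^m * (t+h) - (2:ℝ)^m * t := this
    _ = (2:ℝ)^m * h := by ring

lemma summable_c_phi {c : ℝ} (hc0 : 0 ≤ c) (hc1 : c < 1) (φ : ℕ → ℝ)
    (h0 : ∀ j, 0 ≤ φ j) (hhalf : ∀ j, φ j ≤ 1/2) :
    Summable (fun j => c ^ j * φ j) := by
  apply Summable.of_nonneg_of_le (fun j => mul_nonneg (pow_nonneg hc0 j) (h0 j))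
    (fun j => ?_) ((summable_geometric_of_lt_one hc0 hc1).mul_right (1/2))
  exact mul_le_mul_of_nonneg_left (hhalf j) (pow_nonneg hc0 j)

lemma tlTerm_summable (hθ : IsSign θ) (hH : 0 < H) (t : ℝ) :
    Summable (fun m => tlTerm H θ m t) := by
  have hc0 : (0:ℝ) ≤ (2:ℝ) ^ (-H) := Real.rpow_nonneg (by norm_num) _
  have hc1 : (2:ℝ) ^ (-H) < 1 :=
    Real.rpow_lt_one_of_one_lt_of_neg (by norm_num) (by linarith)
  apply Summable.of_norm
  apply Summable.of_nonneg_of_le (fun m => norm_nonneg _) (fun m => ?_)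
    ((summable_geometric_of_lt_one hc0 hc1).mul_right (1/2))
  calc ‖tlTerm H θ m t‖ ≤ (2:ℝ) ^ (-((m:ℝ) * H)) * phiW ((2:ℝ)^m * t) := tlTerm_abs_le hθ m t
    _ ≤ (2:ℝ) ^ (-((m:ℝ) * H)) * (1/2) :=
        mul_le_mul_of_nonneg_left (phiW_le_half _) (Real.rpow_nonneg (by norm_num) _)
    _ = ((2:ℝ) ^ (-H)) ^ m * (1/2) := by rw [rpow_neg_mul]

lemma lp_bound {c : ℝ} (hc : 1/2 ≤ c) (hc1 : c < 1) (φ : ℕ → ℝ)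
    (h0 : ∀ j, 0 ≤ φ j) (hhalf : ∀ j, φ j ≤ 1/2)
    (hchain : ∀ j, φ j + φ (j+1) / 2 ≤ 1/2) :
    ∑' j, c ^ j * φ j ≤ 1 / (3 * (1 - c)) := by
  have hc0 : (0:ℝ) ≤ c := by linarith
  set lam : ℕ → ℝ := fun j => (c ^ (j+1) - (-2⁻¹:ℝ) ^ (j+1)) / (c + 2⁻¹) with hlam
  have hden : (0:ℝ) < c + 2⁻¹ := by linarith
  have lam_nonneg : ∀ j, 0 ≤ lam j := by
    intro j
    apply div_nonneg _ (le_of_lt hden)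
    have h1 : (-2⁻¹:ℝ) ^ (j+1) ≤ |(-2⁻¹:ℝ) ^ (j+1)| := le_abs_self _
    have h2 : |(-2⁻¹:ℝ) ^ (j+1)| = (2⁻¹:ℝ) ^ (j+1) := by rw [abs_pow]; norm_num
    have h3 : (2⁻¹:ℝ) ^ (j+1) ≤ c ^ (j+1) :=
      pow_le_pow_left₀ (by norm_num) (by linarith) _
    linarith
  have lam_rec : ∀ j, lam (j+1) + lam j / 2 = c ^ (j+1) := by
    intro j
    rw [hlam]
    simp only
    rw [pow_succ c (j+1), pow_succ (-2⁻¹:ℝ) (j+1)]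
    field_simp
    ring
  have lam_zero : lam 0 = 1 := by
    rw [hlam]; simp only [pow_one]; rw [div_eq_one_iff_eq (ne_of_gt hden)]; ring
  have e1 : Summable (fun j : ℕ => c ^ (j+1)) :=
    ((summable_geometric_of_lt_one hc0 hc1).mul_left c).congr
      (fun j => by rw [← pow_succ'])
  have e2 : Summable (fun j : ℕ => (-2⁻¹:ℝ) ^ (j+1)) := by
    have hg : Summable (fun j : ℕ => (-2⁻¹:ℝ) ^ j) := by
      apply summable_geometric_of_norm_lt_one
      rw [norm_neg, norm_inv]
      norm_num
    exact (hg.mul_left (-2⁻¹)).congr (fun j => by rw [← pow_succ'])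
  have hsum_lam : Summable lam :=
    ((e1.sub e2).div_const (c + 2⁻¹)).congr (fun j => by rw [hlam])
  have tsum_lam : ∑' j, lam j = 2 / (3 * (1 - c)) := by
    have hA : ∑' j:ℕ, c ^ (j+1) = c * (1-c)⁻¹ := by
      rw [← tsum_geometric_of_lt_one hc0 hc1, ← tsum_mul_left]
      exact tsum_congr (fun j => by rw [← pow_succ'])
    have hB : ∑' j:ℕ, (-2⁻¹:ℝ) ^ (j+1) = -(1/3) := by
      have hg : ∑' j:ℕ, (-2⁻¹:ℝ) ^ j = (1 - (-2⁻¹))⁻¹ := by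
        apply tsum_geometric_of_norm_lt_one
        rw [norm_neg, norm_inv]; norm_num
      calc ∑' j:ℕ, (-2⁻¹:ℝ) ^ (j+1) = ∑' j:ℕ, (-2⁻¹) * (-2⁻¹:ℝ) ^ j :=
            tsum_congr (fun j => by rw [← pow_succ'])
        _ = (-2⁻¹) * ∑' j:ℕ, (-2⁻¹:ℝ) ^ j := tsum_mul_left
        _ = -(1/3) := by rw [hg]; norm_num
    have : ∑' j, lam j = ((∑' j:ℕ, c^(j+1)) - ∑' j:ℕ, (-2⁻¹:ℝ)^(j+1)) / (c + 2⁻¹) := by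
      rw [← Summable.tsum_sub e1 e2, ← tsum_div_const]
    rw [this, hA, hB]
    have h1c : (1:ℝ) - c ≠ 0 := by intro hcon; linarith
    field_simp
    ring
  have Sg : Summable (fun j => c ^ j * φ j) := summable_c_phi hc0 hc1 φ h0 hhalf
  have SA : Summable (fun j => lam j * φ j) := by
    apply Summable.of_nonneg_of_le (fun j => mul_nonneg (lam_nonneg j) (h0 j))
      (fun j => mul_le_mul_of_nonneg_left (hhalf j) (lam_nonneg j))
      (hsum_lam.mul_right (1/2))
  have SB : Summable (fun j => lam j * φ (j+1)) := by
    apply Summable.of_nonneg_of_le (fun j => mul_nonneg (lam_nonneg j) (h0 _))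
      (fun j => mul_le_mul_of_nonneg_left (hhalf _) (lam_nonneg j))
      (hsum_lam.mul_right (1/2))
  have SA1 : Summable (fun j => lam (j+1) * φ (j+1)) := (summable_nat_add_iff 1).2 SA
  have step1 : ∑' j, c ^ j * φ j
      = ∑' j, lam j * φ j + ∑' j, lam j * φ (j+1) / 2 := by
    rw [Summable.tsum_eq_zero_add Sg, Summable.tsum_eq_zero_add SA]
    have hre : ∀ j:ℕ, c ^ (j+1) * φ (j+1)
        = lam (j+1) * φ (j+1) + lam j * φ (j+1) / 2 := by
      intro j; rw [← lam_rec j]; ring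
    calc c ^ 0 * φ 0 + ∑' j:ℕ, c ^ (j+1) * φ (j+1)
        = lam 0 * φ 0 + ∑' j:ℕ, (lam (j+1) * φ (j+1) + lam j * φ (j+1) / 2) := by
          rw [lam_zero, pow_zero, tsum_congr hre]
      _ = lam 0 * φ 0 + (∑' j:ℕ, lam (j+1) * φ (j+1) + ∑' j:ℕ, lam j * φ (j+1) / 2) := by
          rw [Summable.tsum_add SA1 (SB.div_const 2)]
      _ = _ := by ring
  rw [step1, ← Summable.tsum_add SA (SB.div_const 2)]
  calc ∑' j, (lam j * φ j + lam j * φ (j+1) / 2)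
      ≤ ∑' j, lam j * (1/2) := by
        apply Summable.tsum_le_tsum _ (SA.add (SB.div_const 2)) (hsum_lam.mul_right (1/2))
        intro j
        have := mul_le_mul_of_nonneg_left (hchain j) (lam_nonneg j)
        calc lam j * φ j + lam j * φ (j+1) / 2 = lam j * (φ j + φ (j+1)/2) := by ring
          _ ≤ lam j * (1/2) := this
    _ = (∑' j, lam j) * (1/2) := tsum_mul_right
    _ = 1 / (3 * (1 - c)) := by rw [tsum_lam]; ring

lemma tail_abs_le (hθ : IsSign θ) (hH : H ∈ Set.Ioo (0:ℝ) 1) (n : ℕ) (t : ℝ) :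
    |∑' m, tlTerm H θ (m + n) t|
      ≤ ((2:ℝ) ^ (-H)) ^ n * (1 / (3 * (1 - (2:ℝ) ^ (-H)))) := by
  obtain ⟨hH0, hH1⟩ := hH
  set c : ℝ := (2:ℝ) ^ (-H) with hcdef
  have hc0 : (0:ℝ) ≤ c := Real.rpow_nonneg (by norm_num) _
  have hc1 : c < 1 := Real.rpow_lt_one_of_one_lt_of_neg (by norm_num) (by linarith)
  have hchalf : (1/2 : ℝ) ≤ c := by
    have : (2:ℝ) ^ (-1:ℝ) ≤ (2:ℝ) ^ (-H) :=
      Real.rpow_le_rpow_of_exponent_le (by norm_num) (by linarith)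
    rw [Real.rpow_neg_one] at this
    rw [hcdef]; linarith [this]
  set φ : ℕ → ℝ := fun j => phiW ((2:ℝ) ^ (j + n) * t) with hphidef
  have h0 : ∀ j, 0 ≤ φ j := fun j => phiW_nonneg _
  have hhalf : ∀ j, φ j ≤ 1/2 := fun j => phiW_le_half _
  have hchain : ∀ j, φ j + φ (j+1) / 2 ≤ 1/2 := by
    intro j
    have harg : (2:ℝ) ^ (j + 1 + n) * t = 2 * ((2:ℝ) ^ (j + n) * t) := by
      rw [show j + 1 + n = (j + n) + 1 by ring, pow_succ]
      ring
    have := phiW_chain ((2:ℝ) ^ (j + n) * t)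
    rw [hphidef]
    simp only
    rw [harg]
    exact this
  have hsummand : ∀ m:ℕ, ‖tlTerm H θ (m + n) t‖ ≤ c ^ n * (c ^ m * φ m) := by
    intro m
    calc ‖tlTerm H θ (m + n) t‖
        ≤ (2:ℝ) ^ (-(((m+n:ℕ):ℝ) * H)) * phiW ((2:ℝ) ^ (m+n) * t) := tlTerm_abs_le hθ _ t
      _ = c ^ n * (c ^ m * φ m) := by
          rw [rpow_neg_mul, ← hcdef, hphidef]
          simp only
          rw [pow_add]
          ring
  have hS : Summable (fun m => c ^ n * (c ^ m * φ m)) :=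
    (summable_c_phi hc0 hc1 φ h0 hhalf).mul_left _
  have hSt : Summable (fun m => ‖tlTerm H θ (m + n) t‖) := by
    apply Summable.of_nonneg_of_le (fun m => norm_nonneg _) hsummand hS
  calc |∑' m, tlTerm H θ (m + n) t| ≤ ∑' m, ‖tlTerm H θ (m + n) t‖ :=
        norm_tsum_le_tsum_norm hSt
    _ ≤ ∑' m, c ^ n * (c ^ m * φ m) := Summable.tsum_le_tsum hsummand hSt hS
    _ = c ^ n * ∑' m, c ^ m * φ m := tsum_mul_left
    _ ≤ c ^ n * (1 / (3 * (1 - c))) :=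
        mul_le_mul_of_nonneg_left (lp_bound hchalf hc1 φ h0 hhalf hchain)
          (pow_nonneg hc0 n)

end chunk2

theorem stmt10 (H : ℝ) (hH : H ∈ Set.Ioo (0:ℝ) 1) (x : ℝ → ℝ) (hx : MemX H x)
    (h : ℝ) (hh : h ∈ Set.Ico (0:ℝ) 1) (t : ℝ) (ht : t ∈ Set.Icc 0 (1 - h)) :
    |x (t + h) - x t| ≤ (2:ℝ) ^ (1 - H) * omegaH H h := by
  obtain ⟨hH0, hH1⟩ := hH
  obtain ⟨θ, hsign, hrep⟩ := hx
  obtain ⟨hh0, hh1⟩ := hh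
  have hc0 : (0:ℝ) ≤ (2:ℝ)^(-H) := Real.rpow_nonneg (by norm_num) _
  have hc1 : (2:ℝ)^(-H) < 1 := Real.rpow_lt_one_of_one_lt_of_neg (by norm_num) (by linarith)
  have hr1 : 1 < (2:ℝ)^(1-H) :=
    Real.one_lt_rpow_iff_of_pos (by norm_num) |>.2 (Or.inl ⟨by norm_num, by linarith⟩)
  have hnu : 0 ≤ nuFloor h := by
    unfold nuFloor
    apply Int.floor_nonneg.2
    rcases eq_or_lt_of_le hh0 with he | hpos
    · rw [← he]; simp
    · have := Real.logb_neg (by norm_num : (1:ℝ) < 2) hpos hh1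
      linarith
  set n : ℕ := (nuFloor h).toNat with hndef
  have hn : ((nuFloor h : ℤ) : ℝ) = (n:ℝ) := by
    rw [hndef]; exact_mod_cast (Int.toNat_of_nonneg hnu).symm
  set c : ℝ := (2:ℝ)^(-H) with hcdef
  set r : ℝ := (2:ℝ)^(1-H) with hrdef
  have S1 : Summable (fun m => tlTerm H θ m (t+h)) := tlTerm_summable hsign hH0 _
  have S2 : Summable (fun m => tlTerm H θ m t) := tlTerm_summable hsign hH0 _
  have key : x (t+h) - x t
      = (∑ m ∈ Finset.range n, (tlTerm H θ m (t+h) - tlTerm H θ m t))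
        + (∑' m, tlTerm H θ (m+n) (t+h)) - (∑' m, tlTerm H θ (m+n) t) := by
    rw [hrep, hrep, ← Summable.sum_add_tsum_nat_add n S1, ← Summable.sum_add_tsum_nat_add n S2,
      Finset.sum_sub_distrib]
    ring
  have headper : ∀ m ∈ Finset.range n,
      |tlTerm H θ m (t+h) - tlTerm H θ m t| ≤ r^m * h := by
    intro m _
    calc |tlTerm H θ m (t+h) - tlTerm H θ m t|
        ≤ (2:ℝ)^(-((m:ℝ)*H)) * ((2:ℝ)^m * h) := tlTerm_lip hsign m t h hh0
      _ = r^m * h := by rw [← mul_assoc, rpow_pow_id, hrdef]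
  have hhead : |∑ m ∈ Finset.range n, (tlTerm H θ m (t+h) - tlTerm H θ m t)|
      ≤ ((r^n - 1)/(r-1)) * h := by
    refine le_trans (Finset.abs_sum_le_sum_abs _ _) ?_
    calc ∑ m ∈ Finset.range n, |tlTerm H θ m (t+h) - tlTerm H θ m t|
        ≤ ∑ m ∈ Finset.range n, r^m * h := Finset.sum_le_sum headper
      _ = ((r^n - 1)/(r-1)) * h := by
          rw [← Finset.sum_mul, geom_sum_eq (ne_of_gt hr1)]
  have ht1 := tail_abs_le hsign ⟨hH0, hH1⟩ n (t+h)
  have ht2 := tail_abs_le hsign ⟨hH0, hH1⟩ n t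
  rw [← hcdef] at ht1 ht2
  have habs : |x (t+h) - x t|
      ≤ ((r^n - 1)/(r-1)) * h + (c^n * (1/(3*(1-c))) + c^n * (1/(3*(1-c)))) := by
    rw [key]
    have tri : |(∑ m ∈ Finset.range n, (tlTerm H θ m (t+h) - tlTerm H θ m t))
        + (∑' m, tlTerm H θ (m+n) (t+h)) - (∑' m, tlTerm H θ (m+n) t)|
        ≤ |∑ m ∈ Finset.range n, (tlTerm H θ m (t+h) - tlTerm H θ m t)|
          + (|∑' m, tlTerm H θ (m+n) (t+h)| + |∑' m, tlTerm H θ (m+n) t|) := by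
      calc |(∑ m ∈ Finset.range n, (tlTerm H θ m (t+h) - tlTerm H θ m t))
          + (∑' m, tlTerm H θ (m+n) (t+h)) - (∑' m, tlTerm H θ (m+n) t)|
          ≤ |(∑ m ∈ Finset.range n, (tlTerm H θ m (t+h) - tlTerm H θ m t))
            + (∑' m, tlTerm H θ (m+n) (t+h))| + |∑' m, tlTerm H θ (m+n) t| :=
            abs_sub _ _
        _ ≤ _ := by
            have := abs_add_le (∑ m ∈ Finset.range n, (tlTerm H θ m (t+h) - tlTerm H θ m t))
              (∑' m, tlTerm H θ (m+n) (t+h))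
            linarith
    refine le_trans tri ?_
    have := abs_nonneg (∑' m, tlTerm H θ (m+n) t)
    linarith [hhead, ht1, ht2]
  have hRHS : (2:ℝ)^(1-H) * omegaH H h
      = (r^n/(r-1)) * h + (c^n * (1/(3*(1-c))) + c^n * (1/(3*(1-c)))) := by
    unfold omegaH
    rw [hn, ← hcdef, ← hrdef]
    have X1 : r * (2:ℝ)^(((n:ℝ)-1)*(1-H)) = r^n := by
      rw [hrdef, ← Real.rpow_natCast ((2:ℝ)^(1-H)) n,
        ← Real.rpow_mul (by norm_num : (0:ℝ) ≤ 2),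
        ← Real.rpow_add (by norm_num : (0:ℝ) < 2)]
      congr 1; ring
    have X2 : r * (2:ℝ)^((1-(n:ℝ))*H) = 2 * c^n := by
      have h2 : (2:ℝ) * c^n = (2:ℝ)^((1:ℝ) + -H*(n:ℝ)) := by
        rw [Real.rpow_add (by norm_num : (0:ℝ) < 2), Real.rpow_one, hcdef,
          ← Real.rpow_natCast ((2:ℝ)^(-H)) n, ← Real.rpow_mul (by norm_num : (0:ℝ) ≤ 2)]
      rw [hrdef, ← Real.rpow_add (by norm_num : (0:ℝ) < 2), h2]
      congr 1; ring
    have hrne : r - 1 ≠ 0 := by intro hcon; rw [hrdef] at *; linarith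
    have hcne : 3*(1-c) ≠ 0 := by intro hcon; rw [hcdef] at *; nlinarith
    linear_combination (h/(r-1)) * X1 + (1/(3*(1-c))) * X2
  rw [hRHS]
  refine le_trans habs ?_
  have hrpos : (0:ℝ) < r - 1 := by linarith
  have hmono : ((r^n - 1)/(r-1)) * h ≤ (r^n/(r-1)) * h := by
    apply mul_le_mul_of_nonneg_right _ hh0
    gcongr
    linarith
  linarith
end

section
/- Let p ≥ 1 and let x, y ∈ C[0,1] each admit a continuous p-th variation along the dyadic partitions (𝕋_n), with ⟨y⟩^{(p)}_t = 0 for all t. Then x + y admits the continuous p-th variation ⟨x + y⟩^{(p)}_t = ⟨x⟩^{(p)}_t for all t ∈ [0,1]. -/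
open Filter Finset Set MeasureTheory ProbabilityTheory

def HasPthVarAlong (p : ℝ) (x v : ℝ → ℝ) : Prop :=
  ContinuousOn v (Set.Icc 0 1) ∧
    ∀ t ∈ Set.Icc (0:ℝ) 1, Tendsto (fun n => dyadicSum p x n t) atTop (nhds (v t))

lemma dyadicSum_eq (p : ℝ) (hp : 0 < p) (x : ℝ → ℝ) (n : ℕ) (t : ℝ) :
    dyadicSum p x n t = ∑ k ∈ Finset.range (2 ^ n),
      |(if (k : ℝ) / 2 ^ n ≤ t then x (((k : ℝ) + 1) / 2 ^ n) - x ((k : ℝ) / 2 ^ n) else 0)| ^ p := by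
  unfold dyadicSum
  refine Finset.sum_congr rfl fun k _ => ?_
  split <;> simp [Real.zero_rpow hp.ne']

lemma dyadicSum_nonneg (p : ℝ) (x : ℝ → ℝ) (n : ℕ) (t : ℝ) : 0 ≤ dyadicSum p x n t := by
  refine Finset.sum_nonneg fun k _ => ?_
  split
  · exact Real.rpow_nonneg (abs_nonneg _) p
  · exact le_rfl

lemma key_ineq (p : ℝ) (hp : 1 ≤ p) (u v : ℝ → ℝ) (n : ℕ) (t : ℝ) :
    (dyadicSum p (fun s => u s + v s) n t) ^ (1/p) ≤
      (dyadicSum p u n t) ^ (1/p) + (dyadicSum p v n t) ^ (1/p) := by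
  have hp0 : (0:ℝ) < p := lt_of_lt_of_le one_pos hp
  rw [dyadicSum_eq p hp0 _ n t, dyadicSum_eq p hp0 u n t, dyadicSum_eq p hp0 v n t]
  have := Real.Lp_add_le (Finset.range (2 ^ n))
    (fun k => if (k : ℝ) / 2 ^ n ≤ t then u (((k : ℝ) + 1) / 2 ^ n) - u ((k : ℝ) / 2 ^ n) else 0)
    (fun k => if (k : ℝ) / 2 ^ n ≤ t then v (((k : ℝ) + 1) / 2 ^ n) - v ((k : ℝ) / 2 ^ n) else 0)
    hp
  refine le_trans (le_of_eq ?_) this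
  congr 1
  refine Finset.sum_congr rfl fun k _ => ?_
  by_cases h : (k:ℝ)/2^n ≤ t
  · simp only [if_pos h]; congr 1; congr 1; ring
  · simp only [if_neg h]; norm_num

theorem stmt12 (p : ℝ) (hp : 1 ≤ p) (x y vx vy : ℝ → ℝ)
    (hxc : ContinuousOn x (Set.Icc 0 1)) (hyc : ContinuousOn y (Set.Icc 0 1))
    (hx : HasPthVarAlong p x vx) (hy : HasPthVarAlong p y vy)
    (hy0 : ∀ t ∈ Set.Icc (0:ℝ) 1, vy t = 0) :
    HasPthVarAlong p (fun t => x t + y t) vx := by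
  have hp0 : (0:ℝ) < p := lt_of_lt_of_le one_pos hp
  have hip : (0:ℝ) < 1/p := by positivity
  refine ⟨hx.1, fun t ht => ?_⟩
  have hvx0 : 0 ≤ vx t := le_of_tendsto_of_tendsto tendsto_const_nhds (hx.2 t ht)
    (Filter.Eventually.of_forall fun n => dyadicSum_nonneg p x n t)
  -- limits of the 1/p-powers
  have hxlim : Tendsto (fun n => (dyadicSum p x n t) ^ (1/p)) atTop (nhds ((vx t) ^ (1/p))) :=
    ((Real.continuousAt_rpow_const _ _ (Or.inr hip.le)).tendsto).comp (hx.2 t ht)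
  have hylim : Tendsto (fun n => (dyadicSum p y n t) ^ (1/p)) atTop (nhds 0) := by
    have := ((Real.continuousAt_rpow_const _ _ (Or.inr hip.le)).tendsto).comp (hy.2 t ht)
    rw [hy0 t ht, Real.zero_rpow hip.ne'] at this
    exact this
  -- two-sided Minkowski bound
  have hub : ∀ n, |(dyadicSum p (fun s => x s + y s) n t) ^ (1/p)
      - (dyadicSum p x n t) ^ (1/p)| ≤ (dyadicSum p y n t) ^ (1/p) := by
    intro n
    rw [abs_sub_le_iff]
    constructor
    · have := key_ineq p hp x y n t
      linarith
    · have h2 : (dyadicSum p x n t) ^ (1/p) ≤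
          (dyadicSum p (fun s => x s + y s) n t) ^ (1/p) + (dyadicSum p y n t) ^ (1/p) := by
        have := key_ineq p hp (fun s => x s + y s) (fun s => -y s) n t
        have hxy : dyadicSum p (fun s => x s + y s + -y s) n t = dyadicSum p x n t := by
          unfold dyadicSum; refine Finset.sum_congr rfl fun k _ => ?_; ring_nf
        have hny : dyadicSum p (fun s => -y s) n t = dyadicSum p y n t := by
          unfold dyadicSum
          refine Finset.sum_congr rfl fun k _ => ?_
          congr 1
          rw [show -y (((k:ℝ)+1)/2^n) - -y ((k:ℝ)/2^n) = -(y (((k:ℝ)+1)/2^n) - y ((k:ℝ)/2^n)) by ring, abs_neg]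
        rw [hxy, hny] at this
        exact this
      linarith
  have hdiff : Tendsto (fun n => (dyadicSum p (fun s => x s + y s) n t) ^ (1/p)
      - (dyadicSum p x n t) ^ (1/p)) atTop (nhds 0) :=
    squeeze_zero_norm hub hylim
  have hsum : Tendsto (fun n => (dyadicSum p (fun s => x s + y s) n t) ^ (1/p)) atTop
      (nhds ((vx t) ^ (1/p))) := by
    have := hdiff.add hxlim
    simpa using this
  -- raise to p-th power
  have := ((Real.continuousAt_rpow_const _ p (Or.inr hp0.le)).tendsto).comp hsum
  have heq : ∀ n, ((dyadicSum p (fun s => x s + y s) n t) ^ (1/p)) ^ p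
      = dyadicSum p (fun s => x s + y s) n t := by
    intro n
    rw [← Real.rpow_mul (dyadicSum_nonneg p _ n t), one_div, inv_mul_cancel₀ hp0.ne',
      Real.rpow_one]
  have heq2 : ((vx t) ^ (1/p)) ^ p = vx t := by
    rw [← Real.rpow_mul hvx0, one_div, inv_mul_cancel₀ hp0.ne', Real.rpow_one]
  rw [heq2] at this
  exact this.congr heq
end

section
/- Let H ∈ (0,1), x ∈ 𝔛^H, and 0 < p < 1/H. Then for all t ∈ (0,1], lim_{n→∞} Σ_{s ∈ 𝕋_n, s ≤ t} |x(s′) − x(s)|^p = +∞. -/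
open Filter Finset Set MeasureTheory ProbabilityTheory

lemma e00_of_nonpos {t : ℝ} (ht : t ≤ 0) : e00 t = 0 :=
  max_eq_right (le_trans (min_le_left _ _) ht)

lemma e00_of_one_le {t : ℝ} (ht : 1 ≤ t) : e00 t = 0 :=
  max_eq_right (le_trans (min_le_right _ _) (by linarith))

lemma e00_of_left {t : ℝ} (h0 : 0 ≤ t) (h1 : t ≤ 1/2) : e00 t = t := by
  unfold e00
  rw [min_eq_left (by linarith), max_eq_left h0]

lemma e00_of_right {t : ℝ} (h0 : 1/2 ≤ t) (h1 : t ≤ 1) : e00 t = 1 - t := by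
  unfold e00
  rw [min_eq_right (by linarith), max_eq_left (by linarith)]

lemma e00_int (z : ℤ) : e00 (z : ℝ) = 0 := by
  rcases le_or_gt z 0 with h | h
  · exact e00_of_nonpos (by exact_mod_cast h)
  · exact e00_of_one_le (by exact_mod_cast h)

lemma e00_midpoint (d : ℕ) (hd : 1 ≤ d) (q : ℤ) :
    2 * e00 ((2 * (q:ℝ) + 1) / 2 ^ (d+1)) = e00 ((q:ℝ) / 2 ^ d) + e00 (((q:ℝ) + 1) / 2 ^ d) := by
  have h2d : (0:ℝ) < 2 ^ d := by positivity
  have h2d1 : (0:ℝ) < 2 ^ (d+1) := by positivity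
  have h2dm : (0:ℝ) < 2 ^ (d-1) := by positivity
  have hsplit : (2:ℝ) ^ d = 2 ^ (d-1) * 2 := by
    rw [← pow_succ]; congr 1; omega
  have hsplit1 : (2:ℝ) ^ (d+1) = 2 ^ d * 2 := pow_succ 2 d
  rcases lt_or_ge q 0 with hq | hq
  · have h1 : (q:ℝ) + 1 ≤ 0 := by exact_mod_cast Int.lt_iff_add_one_le.mp hq
    rw [e00_of_nonpos (by apply div_nonpos_of_nonpos_of_nonneg <;> nlinarith),
      e00_of_nonpos (by apply div_nonpos_of_nonpos_of_nonneg <;> nlinarith),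
      e00_of_nonpos (by apply div_nonpos_of_nonpos_of_nonneg <;> nlinarith)]
    ring
  rcases lt_or_ge q (2^(d-1)) with hq2 | hq2
  · have h1 : (q:ℝ) + 1 ≤ 2 ^ (d-1) := by
      have h := Int.lt_iff_add_one_le.mp hq2
      exact_mod_cast h
    have h0 : (0:ℝ) ≤ (q:ℝ) := by exact_mod_cast hq
    rw [e00_of_left (by positivity) (by rw [div_le_iff₀ h2d1]; nlinarith),
      e00_of_left (by positivity) (by rw [div_le_iff₀ h2d]; nlinarith),
      e00_of_left (by positivity) (by rw [div_le_iff₀ h2d]; nlinarith)]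
    field_simp
    ring
  rcases lt_or_ge q (2^d) with hq3 | hq3
  · have h0 : (2:ℝ) ^ (d-1) ≤ (q:ℝ) := by push_cast at hq2 ⊢; exact_mod_cast hq2
    have h1 : (q:ℝ) + 1 ≤ 2 ^ d := by
      have := Int.lt_iff_add_one_le.mp hq3
      push_cast at this ⊢; exact_mod_cast this
    rw [e00_of_right (by rw [le_div_iff₀ h2d1]; nlinarith) (by rw [div_le_one h2d1]; nlinarith),
      e00_of_right (by rw [le_div_iff₀ h2d]; nlinarith) (by rw [div_le_one h2d]; nlinarith),
      e00_of_right (by rw [le_div_iff₀ h2d]; nlinarith) (by rw [div_le_one h2d]; nlinarith)]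
    field_simp
    ring
  · have h0 : (2:ℝ) ^ d ≤ (q:ℝ) := by exact_mod_cast hq3
    rw [e00_of_one_le (by rw [le_div_iff₀ h2d1]; nlinarith),
      e00_of_one_le (by rw [le_div_iff₀ h2d]; nlinarith),
      e00_of_one_le (by rw [le_div_iff₀ h2d]; nlinarith)]
    ring

lemma tlTerm_dyadic (H : ℝ) (θ : ℕ → ℕ → ℝ) (m n k : ℕ) (hmn : n ≤ m) :
    tlTerm H θ m ((k:ℝ) / 2 ^ n) = 0 := by
  unfold tlTerm
  rw [Finset.sum_eq_zero, mul_zero]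
  intro j hj
  unfold fs
  have h2 : (2:ℝ) ^ m = 2 ^ (m-n) * 2 ^ n := by rw [← pow_add]; congr 1; omega
  have hn : ((2:ℝ)^n) ≠ 0 := by positivity
  have harg : (2:ℝ) ^ m * ((k:ℝ) / 2 ^ n) - ((j:ℤ):ℝ) = (((k * 2^(m-n) : ℕ) : ℤ) - (j:ℤ) : ℤ) := by
    push_cast
    rw [h2]
    field_simp
  rw [harg, e00_int, mul_zero, mul_zero]

lemma x_dyadic (H : ℝ) (θ : ℕ → ℕ → ℝ) (n a : ℕ) :
    (∑' m : ℕ, tlTerm H θ m ((a:ℝ)/2^n)) = ∑ m ∈ Finset.range n, tlTerm H θ m ((a:ℝ)/2^n) := by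
  apply tsum_eq_sum
  intro m hm
  exact tlTerm_dyadic H θ m n a (le_of_not_gt (by simpa using hm))

lemma fs_middiff (m N k j : ℕ) (hm : m + 2 ≤ N) :
    2 * fs m (j:ℤ) ((2*(k:ℝ)+1)/2^N) =
      fs m (j:ℤ) ((2*(k:ℝ))/2^N) + fs m (j:ℤ) ((2*(k:ℝ)+2)/2^N) := by
  unfold fs
  set d : ℕ := N - m - 1 with hd
  have hd1 : 1 ≤ d := by omega
  have hN : (2:ℝ)^N = 2^m * 2^(d+1) := by rw [← pow_add]; congr 1; omega
  have hdd : (2:ℝ)^(d+1) = 2^d * 2 := pow_succ 2 d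
  have hne : ((2:ℝ)^(d+1)) ≠ 0 := by positivity
  have hne2 : ((2:ℝ)^d) ≠ 0 := by positivity
  have hm0 : ((2:ℝ)^m) ≠ 0 := by positivity
  set q : ℤ := (k:ℤ) - j * 2^d with hq
  have hqr : (q:ℝ) = (k:ℝ) - (j:ℝ) * 2^d := by push_cast [hq]; ring
  have h1 : (2:ℝ)^m * ((2*(k:ℝ)+1)/2^N) - ((j:ℤ):ℝ) = (2*(q:ℝ)+1)/2^(d+1) := by
    rw [hN, hqr]; push_cast; field_simp; ring
  have h0 : (2:ℝ)^m * ((2*(k:ℝ))/2^N) - ((j:ℤ):ℝ) = (q:ℝ)/2^d := by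
    rw [hN, hqr]; push_cast; field_simp; ring
  have h2 : (2:ℝ)^m * ((2*(k:ℝ)+2)/2^N) - ((j:ℤ):ℝ) = ((q:ℝ)+1)/2^d := by
    rw [hN, hqr]; push_cast; field_simp; ring
  rw [h1, h0, h2, ← mul_add, ← e00_midpoint d hd1 q]
  ring

lemma tlTerm_middiff (H : ℝ) (θ : ℕ → ℕ → ℝ) (m N k : ℕ) (hm : m + 2 ≤ N) :
    2 * tlTerm H θ m ((2*(k:ℝ)+1)/2^N) =
      tlTerm H θ m ((2*(k:ℝ))/2^N) + tlTerm H θ m ((2*(k:ℝ)+2)/2^N) := by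
  unfold tlTerm
  have key : ∀ j ∈ Finset.range (2^m),
      2 * (θ m j * fs m (j:ℤ) ((2*(k:ℝ)+1)/2^N)) =
        θ m j * fs m (j:ℤ) ((2*(k:ℝ))/2^N) + θ m j * fs m (j:ℤ) ((2*(k:ℝ)+2)/2^N) := by
    intro j _
    have h := fs_middiff m N k j hm
    calc 2 * (θ m j * fs m (j:ℤ) ((2*(k:ℝ)+1)/2^N)) = θ m j * (2 * fs m (j:ℤ) ((2*(k:ℝ)+1)/2^N)) := by ring
      _ = _ := by rw [h]; ring
  have hsum := Finset.sum_congr rfl key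
  rw [Finset.sum_add_distrib, ← Finset.mul_sum] at hsum
  calc 2 * ((2:ℝ)^((m:ℝ)*(1/2-H)) * ∑ j ∈ Finset.range (2^m), θ m j * fs m (j:ℤ) ((2*(k:ℝ)+1)/2^N))
      = (2:ℝ)^((m:ℝ)*(1/2-H)) * (2 * ∑ j ∈ Finset.range (2^m), θ m j * fs m (j:ℤ) ((2*(k:ℝ)+1)/2^N)) := by ring
    _ = _ := by rw [hsum]; ring

lemma tlTerm_mid (H : ℝ) (θ : ℕ → ℕ → ℝ) (n k : ℕ) (hk : k < 2^n) :
    tlTerm H θ n ((2*(k:ℝ)+1)/2^(n+1)) = θ n k * (2:ℝ)^(-(n:ℝ)*H) / 2 := by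
  unfold tlTerm fs
  have hpow : (2:ℝ)^(n+1) = 2^n * 2 := pow_succ 2 n
  have hne : ((2:ℝ)^n) ≠ 0 := by positivity
  have harg : ∀ j : ℕ, (2:ℝ)^n * ((2*(k:ℝ)+1)/2^(n+1)) - ((j:ℤ):ℝ) = ((k:ℝ) - j) + 1/2 := by
    intro j
    rw [hpow]; push_cast; field_simp; ring
  rw [Finset.sum_eq_single k]
  · rw [harg]
    have he : e00 ((k:ℝ) - (k:ℝ) + 1/2) = 1/2 := by
      rw [sub_self, zero_add, e00_of_left] <;> norm_num
    rw [he]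
    have hcomb : (2:ℝ)^((n:ℝ)*(1/2-H)) * (2:ℝ)^(-(n:ℝ)/2) = (2:ℝ)^(-(n:ℝ)*H) := by
      rw [← Real.rpow_add (by norm_num : (0:ℝ) < 2)]
      congr 1; ring
    calc (2:ℝ)^((n:ℝ)*(1/2-H)) * (θ n k * ((2:ℝ)^(-(n:ℝ)/2) * (1/2)))
        = ((2:ℝ)^((n:ℝ)*(1/2-H)) * (2:ℝ)^(-(n:ℝ)/2)) * θ n k / 2 := by ring
      _ = θ n k * (2:ℝ)^(-(n:ℝ)*H) / 2 := by rw [hcomb]; ring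
  · intro j _ hj
    rw [harg]
    rcases lt_or_gt_of_ne hj with h | h
    · have : (j:ℝ) + 1 ≤ (k:ℝ) := by exact_mod_cast h
      rw [e00_of_one_le (by linarith), mul_zero, mul_zero]
    · have : (k:ℝ) + 1 ≤ (j:ℝ) := by exact_mod_cast h
      rw [e00_of_nonpos (by linarith), mul_zero, mul_zero]
  · intro h
    exact absurd (Finset.mem_range.mpr hk) h

lemma x_seconddiff (H : ℝ) (θ : ℕ → ℕ → ℝ) (x : ℝ → ℝ)
    (hxval : ∀ t, x t = ∑' m : ℕ, tlTerm H θ m t) (n k : ℕ) (hk : k < 2^n) :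
    2 * x ((2*(k:ℝ)+1)/2^(n+1)) - x ((2*(k:ℝ))/2^(n+1)) - x ((2*(k:ℝ)+2)/2^(n+1))
      = θ n k * (2:ℝ)^(-(n:ℝ)*H) := by
  have e1 : (2*(k:ℝ)+1) = ((2*k+1 : ℕ) : ℝ) := by push_cast; ring
  have e0 : (2*(k:ℝ)) = ((2*k : ℕ) : ℝ) := by push_cast; ring
  have e2 : (2*(k:ℝ)+2) = ((2*k+2 : ℕ) : ℝ) := by push_cast; ring
  have v1 : x ((2*(k:ℝ)+1)/2^(n+1)) = ∑ m ∈ Finset.range (n+1), tlTerm H θ m ((2*(k:ℝ)+1)/2^(n+1)) := by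
    rw [hxval, e1, x_dyadic]
  have v0 : x ((2*(k:ℝ))/2^(n+1)) = ∑ m ∈ Finset.range (n+1), tlTerm H θ m ((2*(k:ℝ))/2^(n+1)) := by
    rw [hxval, e0, x_dyadic]
  have v2 : x ((2*(k:ℝ)+2)/2^(n+1)) = ∑ m ∈ Finset.range (n+1), tlTerm H θ m ((2*(k:ℝ)+2)/2^(n+1)) := by
    rw [hxval, e2, x_dyadic]
  rw [v1, v0, v2, Finset.mul_sum, ← Finset.sum_sub_distrib, ← Finset.sum_sub_distrib]
  rw [Finset.sum_range_succ]
  have hzero : ∑ m ∈ Finset.range n, (2 * tlTerm H θ m ((2*(k:ℝ)+1)/2^(n+1))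
      - tlTerm H θ m ((2*(k:ℝ))/2^(n+1)) - tlTerm H θ m ((2*(k:ℝ)+2)/2^(n+1))) = 0 := by
    apply Finset.sum_eq_zero
    intro m hm
    have := tlTerm_middiff H θ m (n+1) k (by simp at hm; omega)
    linarith
  rw [hzero, zero_add]
  have hs0 : (2*(k:ℝ))/2^(n+1) = ((k:ℕ):ℝ)/2^n := by
    rw [pow_succ]; field_simp
  have hs2 : (2*(k:ℝ)+2)/2^(n+1) = (((k+1:ℕ)):ℝ)/2^n := by
    rw [pow_succ]; push_cast; field_simp
  rw [tlTerm_mid H θ n k hk, hs0, hs2, tlTerm_dyadic H θ n n k le_rfl,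
    tlTerm_dyadic H θ n n (k+1) le_rfl]
  ring

lemma pair_bound (H p : ℝ) (θ : ℕ → ℕ → ℝ) (hθ : IsSign θ) (hp0 : 0 < p) (x : ℝ → ℝ)
    (hxval : ∀ t, x t = ∑' m : ℕ, tlTerm H θ m t) (n k : ℕ) (hk : k < 2^n) :
    ((2:ℝ)^(-(n:ℝ)*H)/2)^p ≤
      |x ((2*(k:ℝ)+1)/2^(n+1)) - x ((2*(k:ℝ))/2^(n+1))| ^ p
      + |x ((2*(k:ℝ)+2)/2^(n+1)) - x ((2*(k:ℝ)+1)/2^(n+1))| ^ p := by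
  set A := |x ((2*(k:ℝ)+1)/2^(n+1)) - x ((2*(k:ℝ))/2^(n+1))| with hA
  set B := |x ((2*(k:ℝ)+2)/2^(n+1)) - x ((2*(k:ℝ)+1)/2^(n+1))| with hB
  have hD := x_seconddiff H θ x hxval n k hk
  have hθnk : |θ n k| = 1 := by rcases hθ n k with h | h <;> simp [h]
  have habs : (2:ℝ)^(-(n:ℝ)*H) ≤ A + B := by
    have h1 : (2:ℝ)^(-(n:ℝ)*H) = |θ n k * (2:ℝ)^(-(n:ℝ)*H)| := by
      rw [abs_mul, hθnk, one_mul, abs_of_pos (by positivity)]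
    rw [h1, ← hD]
    calc |2 * x ((2*(k:ℝ)+1)/2^(n+1)) - x ((2*(k:ℝ))/2^(n+1)) - x ((2*(k:ℝ)+2)/2^(n+1))|
        = |(x ((2*(k:ℝ)+1)/2^(n+1)) - x ((2*(k:ℝ))/2^(n+1)))
            - (x ((2*(k:ℝ)+2)/2^(n+1)) - x ((2*(k:ℝ)+1)/2^(n+1)))| := by ring_nf
      _ ≤ A + B := (abs_sub _ _)
  have hA0 : 0 ≤ A := abs_nonneg _
  have hB0 : 0 ≤ B := abs_nonneg _
  have hhalf : (2:ℝ)^(-(n:ℝ)*H)/2 ≤ max A B := by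
    rcases le_total A B with h | h
    · rw [max_eq_right h]; linarith
    · rw [max_eq_left h]; linarith
  rcases le_total A B with h | h
  · calc ((2:ℝ)^(-(n:ℝ)*H)/2)^p ≤ B^p := by
          apply Real.rpow_le_rpow (by positivity) _ hp0.le
          rw [max_eq_right h] at hhalf; exact hhalf
      _ ≤ A^p + B^p := by nlinarith [Real.rpow_nonneg hA0 p]
  · calc ((2:ℝ)^(-(n:ℝ)*H)/2)^p ≤ A^p := by
          apply Real.rpow_le_rpow (by positivity) _ hp0.le
          rw [max_eq_left h] at hhalf; exact hhalf
      _ ≤ A^p + B^p := by nlinarith [Real.rpow_nonneg hB0 p]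

lemma sum_range_two_mul (M : ℕ) (g : ℕ → ℝ) :
    ∑ j ∈ Finset.range (2*M), g j = ∑ k ∈ Finset.range M, (g (2*k) + g (2*k+1)) := by
  induction M with
  | zero => simp
  | succ M ih =>
    rw [show 2*(M+1) = (2*M+1)+1 from by ring, Finset.sum_range_succ, Finset.sum_range_succ,
      ih, Finset.sum_range_succ]
    ring

theorem stmt16 (H p : ℝ) (hH : H ∈ Set.Ioo (0:ℝ) 1) (hp0 : 0 < p) (hp : p < 1/H)
    (x : ℝ → ℝ) (hx : MemX H x) (t : ℝ) (ht : t ∈ Set.Ioc (0:ℝ) 1) :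
    Tendsto (fun n => dyadicSum p x n t) atTop atTop := by
  obtain ⟨θ, hθ, hxval⟩ := hx
  obtain ⟨hH0, hH1⟩ := hH
  obtain ⟨ht0, ht1⟩ := ht
  have hHp : H * p < 1 := by
    rw [lt_div_iff₀ hH0] at hp; linarith
  -- the per-level constant
  set c : ℕ → ℝ := fun n => ((2:ℝ)^(-(n:ℝ)*H)/2)^p with hc
  have hc0 : ∀ n, 0 ≤ c n := fun n => Real.rpow_nonneg (by positivity) p
  -- step 1: lower bound of dyadicSum (n+1) by floor count
  have key : ∀ n : ℕ, ((⌊t * 2^n⌋₊ : ℝ)) * c n ≤ dyadicSum p x (n+1) t := by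
    intro n
    set K : ℕ := ⌊t * 2^n⌋₊ with hK
    have h2n1 : (0:ℝ) < 2^(n+1) := by positivity
    have hKle : K ≤ 2^n := by
      have h1 : t * 2^n ≤ ((2^n : ℕ) : ℝ) := by
        push_cast
        nlinarith [pow_pos (by norm_num : (0:ℝ) < 2) n]
      calc K ≤ ⌊((2^n : ℕ) : ℝ)⌋₊ := Nat.floor_mono h1
        _ = 2^n := Nat.floor_natCast _
    have hKreal : (K : ℝ) ≤ t * 2^n := Nat.floor_le (by positivity)
    unfold dyadicSum
    rw [show (2:ℕ)^(n+1) = 2*2^n from by ring, sum_range_two_mul]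
    set g : ℕ → ℝ := fun j =>
      if (j : ℝ) / 2 ^ (n+1) ≤ t then |x (((j : ℝ) + 1) / 2 ^ (n+1)) - x ((j : ℝ) / 2 ^ (n+1))| ^ p else 0
      with hg
    have hgnn : ∀ j, 0 ≤ g j := by
      intro j; rw [hg]; dsimp only; split <;> positivity
    calc (K:ℝ) * c n = ∑ _k ∈ Finset.range K, c n := by
          rw [Finset.sum_const, Finset.card_range, nsmul_eq_mul]
      _ ≤ ∑ k ∈ Finset.range K, (g (2*k) + g (2*k+1)) := by
          apply Finset.sum_le_sum
          intro k hk
          have hkK : (k:ℝ) + 1 ≤ K := by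
            exact_mod_cast Nat.succ_le_of_lt (Finset.mem_range.mp hk)
          have hcond2 : ((2*k+1 : ℕ):ℝ) / 2^(n+1) ≤ t := by
            rw [div_le_iff₀ h2n1, pow_succ]
            push_cast
            nlinarith [pow_pos (by norm_num : (0:ℝ) < 2) n]
          have hcond1 : ((2*k : ℕ):ℝ) / 2^(n+1) ≤ t := by
            have hmono : ((2*k:ℕ):ℝ) ≤ ((2*k+1:ℕ):ℝ) := by push_cast; linarith
            exact le_trans (by gcongr) hcond2
          rw [hg]
          dsimp only
          rw [if_pos hcond1, if_pos hcond2]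
          push_cast
          rw [show 2*(k:ℝ)+1+1 = 2*(k:ℝ)+2 from by ring]
          exact pair_bound H p θ hθ hp0 x hxval n k (lt_of_lt_of_le (Finset.mem_range.mp hk) hKle)
      _ ≤ ∑ k ∈ Finset.range (2^n), (g (2*k) + g (2*k+1)) := by
          apply Finset.sum_le_sum_of_subset_of_nonneg
          · exact Finset.range_subset_range.mpr hKle
          · intro k _ _; exact add_nonneg (hgnn _) (hgnn _)
  -- step 2: the lower bound tends to infinity
  have hr1 : 1 < (2:ℝ)^(1 - H*p) := by
    rw [Real.one_lt_rpow_iff_of_pos (by norm_num)]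
    exact Or.inl ⟨by norm_num, by nlinarith⟩
  have h2p : (0:ℝ) < (2:ℝ)^p := Real.rpow_pos_of_pos (by norm_num) p
  have hcval : ∀ n : ℕ, c n = (2:ℝ)^(-(n:ℝ)*(H*p)) / (2:ℝ)^p := by
    intro n
    rw [hc]
    dsimp only
    rw [Real.div_rpow (by positivity) (by norm_num), ← Real.rpow_mul (by norm_num : (0:ℝ) ≤ 2),
      show (-(n:ℝ)*H)*p = -(n:ℝ)*(H*p) from by ring]
  have hpow : ∀ n : ℕ, ((2:ℝ)^(1-H*p))^n = (2:ℝ)^n * (2:ℝ)^(-(n:ℝ)*(H*p)) := by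
    intro n
    rw [← Real.rpow_natCast ((2:ℝ)^(1-H*p)) n, ← Real.rpow_mul (by norm_num : (0:ℝ) ≤ 2),
      ← Real.rpow_natCast (2:ℝ) n, ← Real.rpow_add (by norm_num : (0:ℝ) < 2)]
    congr 1; push_cast; ring
  have hcle : ∀ n : ℕ, c n ≤ 1/(2:ℝ)^p := by
    intro n
    rw [hcval n]
    gcongr
    apply Real.rpow_le_one_of_one_le_of_nonpos (by norm_num)
    have h1 : (0:ℝ) ≤ (n:ℝ) := Nat.cast_nonneg n
    nlinarith [mul_nonneg h1 (mul_pos hH0 hp0).le]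
  have hLbound : ∀ n : ℕ, t/(2:ℝ)^p * ((2:ℝ)^(1-H*p))^n - 1/(2:ℝ)^p ≤ ((⌊t * 2^n⌋₊ : ℝ)) * c n := by
    intro n
    have hfl : t * 2^n - 1 ≤ (⌊t * 2^n⌋₊ : ℝ) := by
      have := Nat.lt_floor_add_one (t * 2^n)
      linarith
    calc t/(2:ℝ)^p * ((2:ℝ)^(1-H*p))^n - 1/(2:ℝ)^p
        = t * 2^n * (2:ℝ)^(-(n:ℝ)*(H*p)) / (2:ℝ)^p - 1/(2:ℝ)^p := by rw [hpow]; ring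
      _ ≤ t * 2^n * (2:ℝ)^(-(n:ℝ)*(H*p)) / (2:ℝ)^p - c n := by
          have := hcle n; linarith
      _ = (t * 2^n - 1) * c n := by rw [hcval n]; ring
      _ ≤ ((⌊t * 2^n⌋₊ : ℝ)) * c n := mul_le_mul_of_nonneg_right hfl (hc0 n)
  have hT : Tendsto (fun n : ℕ => t/(2:ℝ)^p * ((2:ℝ)^(1-H*p))^n - 1/(2:ℝ)^p) atTop atTop := by
    have h1 : Tendsto (fun n : ℕ => t/(2:ℝ)^p * ((2:ℝ)^(1-H*p))^n) atTop atTop :=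
      (tendsto_pow_atTop_atTop_of_one_lt hr1).const_mul_atTop (by positivity)
    simpa [sub_eq_add_neg] using tendsto_atTop_add_const_right atTop (-(1/(2:ℝ)^p)) h1
  have hfinal : Tendsto (fun n => dyadicSum p x (n+1) t) atTop atTop :=
    tendsto_atTop_mono (fun n => le_trans (hLbound n) (key n)) hT
  exact (tendsto_add_atTop_iff_nat 1).mp hfinal
end

section
/- Suppose H ∈ (0,1) is such that p = 1/H is an odd integer, and let x ∈ 𝔛^H. Then for all t ∈ [0,1], lim_{n→∞} Σ_{s ∈ 𝕋_n, s ≤ t} (x(s′) − x(s))^p = 0 (signed p-th power sums, without absolute values). -/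
open Filter Finset Set MeasureTheory ProbabilityTheory

namespace Stmt17Aux

lemma e00_nonpos {u : ℝ} (h : u ≤ 0) : e00 u = 0 := by
  unfold e00
  rw [max_eq_right]
  exact le_trans (min_le_left _ _) h

lemma e00_one_le {u : ℝ} (h : 1 ≤ u) : e00 u = 0 := by
  unfold e00
  rw [max_eq_right]
  exact le_trans (min_le_right _ _) (by linarith)

lemma e00_low {u : ℝ} (h0 : 0 ≤ u) (h : u ≤ 1/2) : e00 u = u := by
  unfold e00
  rw [min_eq_left (by linarith), max_eq_left h0]

lemma e00_high {u : ℝ} (h : 1/2 ≤ u) (h1 : u ≤ 1) : e00 u = 1 - u := by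
  unfold e00
  rw [min_eq_right (by linarith), max_eq_left (by linarith)]

lemma e00_int (z : ℤ) : e00 (z : ℝ) = 0 := by
  rcases le_or_gt z 0 with h | h
  · exact e00_nonpos (by exact_mod_cast h)
  · exact e00_one_le (by exact_mod_cast h)

/-- abstract increment family -/
noncomputable def Dfun (w : ℕ → ℝ) (θ : ℕ → ℕ → ℝ) (d k : ℕ) : ℝ :=
  ∑ m ∈ Finset.range d,
    w m * θ m (k / 2^(d-m)) * (1 - 2 * (((k / 2^(d-m-1)) % 2 : ℕ) : ℝ))

lemma Dfun_zero (w θ k) : Dfun w θ 0 k = 0 := by simp [Dfun]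

lemma Dfun_left (w : ℕ → ℝ) (θ : ℕ → ℕ → ℝ) (d k : ℕ) (hk : k < 2^d) :
    Dfun w θ (d+1) k
      = w 0 * θ 0 0 + Dfun (fun m => w (m+1)) (fun m j => θ (m+1) j) d k := by
  unfold Dfun
  rw [Finset.sum_range_succ']
  have h1 : k / 2^(d+1) = 0 :=
    Nat.div_eq_of_lt (lt_trans hk (Nat.pow_lt_pow_succ one_lt_two))
  have h2 : k / 2^d = 0 := Nat.div_eq_of_lt hk
  rw [add_comm]
  congr 1
  · simp only [Nat.sub_zero, Nat.add_sub_cancel, h1, h2]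
    norm_num
  · apply Finset.sum_congr rfl
    intro m hm
    simp

lemma Dfun_right (w : ℕ → ℝ) (θ : ℕ → ℕ → ℝ) (d r : ℕ) (hr : r < 2^d) :
    Dfun w θ (d+1) (2^d + r)
      = -(w 0 * θ 0 0) + Dfun (fun m => w (m+1)) (fun m j => θ (m+1) (2^m + j)) d r := by
  unfold Dfun
  rw [Finset.sum_range_succ']
  have h1 : (2^d + r) / 2^(d+1) = 0 := by
    apply Nat.div_eq_of_lt
    have : 2^(d+1) = 2^d + 2^d := by ring
    omega
  have h2 : (2^d + r) / 2^d = 1 := by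
    rw [add_comm, Nat.add_div_right _ (pow_pos (by norm_num : (0:ℕ) < 2) d),
      Nat.div_eq_of_lt hr]
  rw [add_comm]
  congr 1
  · simp only [Nat.sub_zero, Nat.add_sub_cancel, h1, h2]
    norm_num
  · apply Finset.sum_congr rfl
    intro m hm
    have hm' : m < d := Finset.mem_range.mp hm
    rw [show d + 1 - (m+1) = d - m from by omega]
    have hsplit : 2^d = 2^(d-m) * 2^m := by
      rw [← pow_add]; congr 1; omega
    have hidx : (2^d + r) / 2^(d-m) = 2^m + r / 2^(d-m) := by
      rw [hsplit, Nat.mul_add_div (pow_pos (by norm_num : (0:ℕ) < 2) _)]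
    have hsplit2 : 2^d = 2^(d-m-1) * 2^(m+1) := by
      rw [← pow_add]; congr 1; omega
    have hbit : (2^d + r) / 2^(d-m-1) % 2 = r / 2^(d-m-1) % 2 := by
      rw [hsplit2, Nat.mul_add_div (pow_pos (by norm_num : (0:ℕ) < 2) _)]
      rw [pow_succ, mul_comm (2^m) 2, Nat.mul_add_mod]
    rw [hidx, hbit]


lemma Dfun_key (d : ℕ) : ∀ (w : ℕ → ℝ) (θ θ' : ℕ → ℕ → ℝ), IsSign θ → IsSign θ' →
    ∀ j : ℕ,
    (Odd j → ∑ k ∈ range (2^d), Dfun w θ d k ^ j = 0) ∧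
    (∑ k ∈ range (2^d), Dfun w θ d k ^ j = ∑ k ∈ range (2^d), Dfun w θ' d k ^ j) := by
  induction d with
  | zero =>
    intro w θ θ' hθ hθ' j
    constructor
    · intro hj
      simp [Dfun, zero_pow hj.pos.ne']
    · rfl
  | succ d ih =>
    intro w θ θ' hθ hθ' j
    -- the two halves
    have hsplit : ∀ (τ : ℕ → ℕ → ℝ), IsSign τ →
        ∑ k ∈ range (2^(d+1)), Dfun w τ (d+1) k ^ j
        = ∑ i ∈ range (j+1),
            (∑ k ∈ range (2^d), Dfun (fun m => w (m+1)) (fun m l => τ (m+1) l) d k ^ i)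
              * ((w 0 * τ 0 0) ^ (j-i) * (1 + (-1:ℝ)^(j-i)) * (j.choose i)) := by
      intro τ hτ
      have h2 : 2^(d+1) = 2^d + 2^d := by ring
      rw [h2, Finset.sum_range_add]
      have hL : ∀ k ∈ range (2^d), Dfun w τ (d+1) k ^ j
          = ∑ i ∈ range (j+1),
            Dfun (fun m => w (m+1)) (fun m l => τ (m+1) l) d k ^ i
              * (w 0 * τ 0 0) ^ (j-i) * (j.choose i) := by
        intro k hk
        rw [Dfun_left w τ d k (mem_range.mp hk), add_comm, add_pow]
      have hR : ∀ r ∈ range (2^d), Dfun w τ (d+1) (2^d + r) ^ j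
          = ∑ i ∈ range (j+1),
            Dfun (fun m => w (m+1)) (fun m l => τ (m+1) (2^m + l)) d r ^ i
              * (-(w 0 * τ 0 0)) ^ (j-i) * (j.choose i) := by
        intro r hr
        rw [Dfun_right w τ d r (mem_range.mp hr), add_comm, add_pow]
      rw [Finset.sum_congr rfl hL, Finset.sum_congr rfl hR,
        Finset.sum_comm, Finset.sum_comm (s := range (2^d))]
      rw [← Finset.sum_add_distrib]
      apply Finset.sum_congr rfl
      intro i hi
      -- use θ-independence of inner sums (ih) to replace right-inner sum by left-inner
      have hind := (ih (fun m => w (m+1)) (fun m l => τ (m+1) l)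
        (fun m l => τ (m+1) (2^m + l)) (fun m l => hτ (m+1) l)
        (fun m l => hτ (m+1) (2^m + l)) i).2
      rw [← Finset.sum_mul, ← Finset.sum_mul, ← Finset.sum_mul, ← Finset.sum_mul,
        ← hind, neg_pow, ← mul_assoc]
      ring
    have hterm : ∀ (τ : ℕ → ℕ → ℝ), IsSign τ → ∀ i ∈ range (j+1),
        (∑ k ∈ range (2^d), Dfun (fun m => w (m+1)) (fun m l => τ (m+1) l) d k ^ i)
          * ((w 0 * τ 0 0) ^ (j-i) * (1 + (-1:ℝ)^(j-i)) * (j.choose i))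
        = if (Odd i ∨ Odd (j - i)) then 0 else
          (∑ k ∈ range (2^d), Dfun (fun m => w (m+1)) (fun m l => (1:ℝ)) d k ^ i)
            * (w 0 ^ (j-i) * 2 * (j.choose i)) := by
      intro τ hτ i hi
      by_cases h1 : Odd i
      · rw [if_pos (Or.inl h1)]
        rw [(ih (fun m => w (m+1)) (fun m l => τ (m+1) l) (fun m l => τ (m+1) l)
          (fun m l => hτ (m+1) l) (fun m l => hτ (m+1) l) i).1 h1]
        ring
      by_cases h2 : Odd (j - i)
      · rw [if_pos (Or.inr h2), h2.neg_one_pow]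
        ring
      · rw [if_neg (by tauto)]
        have he2 : Even (j - i) := Nat.not_odd_iff_even.mp h2
        rw [he2.neg_one_pow]
        have hτpow : (w 0 * τ 0 0) ^ (j-i) = w 0 ^ (j-i) := by
          rw [mul_pow]
          rcases hτ 0 0 with h | h <;> rw [h] <;> simp [he2.neg_one_pow]
        rw [hτpow]
        have hone : IsSign (fun _ _ => (1:ℝ)) := fun _ _ => Or.inl rfl
        rw [(ih (fun m => w (m+1)) (fun m l => τ (m+1) l) (fun m l => (1:ℝ))
          (fun m l => hτ (m+1) l) hone i).2]
        ring
    constructor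
    · intro hj
      rw [hsplit θ hθ]
      apply Finset.sum_eq_zero
      intro i hi
      rw [hterm θ hθ i hi]
      have hij : Odd i ∨ Odd (j - i) := by
        have : i ≤ j := by simpa using Nat.lt_succ_iff.mp (mem_range.mp hi)
        rcases Nat.even_or_odd i with h | h
        · right
          rw [Nat.odd_sub this]
          simp [Nat.odd_iff, Nat.even_iff] at *
          omega
        · exact Or.inl h
      rw [if_pos hij]
    · rw [hsplit θ hθ, hsplit θ' hθ']
      apply Finset.sum_congr rfl
      intro i hi
      rw [hterm θ hθ i hi, hterm θ' hθ' i hi]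


noncomputable def Asum (w : ℕ → ℝ) (d : ℕ) : ℝ := ∑ m ∈ range d, w m

noncomputable def Bnd (p : ℕ) : ℕ → (ℕ → ℝ) → ℝ → ℝ
  | 0, _, a => a ^ p
  | d+1, w, a => 2^d * p * (a + w 0) * (a + Asum w (d+1)) ^ (p-1)
      + Bnd p d (fun m => w (m+1)) (a + w 0)

lemma abs_Dfun_le (w : ℕ → ℝ) (hw : ∀ m, 0 ≤ w m) (θ : ℕ → ℕ → ℝ) (hθ : IsSign θ)
    (d k : ℕ) : |Dfun w θ d k| ≤ Asum w d := by
  unfold Dfun Asum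
  refine le_trans (Finset.abs_sum_le_sum_abs _ _) (Finset.sum_le_sum ?_)
  intro m hm
  rw [abs_mul, abs_mul]
  have h1 : |θ m (k / 2^(d-m))| = 1 := by
    rcases hθ m (k / 2^(d-m)) with h | h <;> simp [h]
  have h2 : |1 - 2 * (((k / 2^(d-m-1)) % 2 : ℕ) : ℝ)| ≤ 1 := by
    have := Nat.mod_lt (k / 2^(d-m-1)) (show 0 < 2 by norm_num)
    have h0 : ((k / 2^(d-m-1)) % 2 : ℕ) = 0 ∨ ((k / 2^(d-m-1)) % 2 : ℕ) = 1 := by omega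
    rcases h0 with h | h <;> rw [h] <;> norm_num
  calc |w m| * |θ m (k / 2^(d-m))| * |1 - 2 * (((k / 2^(d-m-1)) % 2 : ℕ) : ℝ)|
      ≤ |w m| * 1 * 1 := by
        apply mul_le_mul (by rw [h1]) h2 (abs_nonneg _)
        positivity
    _ = w m := by rw [mul_one, mul_one, abs_of_nonneg (hw m)]

lemma choose_le (p i : ℕ) (hi : i ≤ p - 1) (hp : 1 ≤ p) :
    (p.choose i : ℝ) ≤ p * (p-1).choose i := by
  have key := Nat.add_one_mul_choose_eq (p-1) (p-1-i)
  rw [show p - 1 + 1 = p by omega, show p - 1 - i + 1 = p - i by omega,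
    Nat.choose_symm hi, Nat.choose_symm (show i ≤ p by omega)] at key
  have hc : p.choose i ≤ p * (p-1).choose i := by
    rw [key]
    have h1 : 1 ≤ p - i := by omega
    calc p.choose i = p.choose i * 1 := by ring
      _ ≤ p.choose i * (p-i) := Nat.mul_le_mul_left _ h1
  exact_mod_cast hc

lemma full_block (p : ℕ) (hodd : Odd p) (d : ℕ) (w : ℕ → ℝ) (hw : ∀ m, 0 ≤ w m)
    (θ : ℕ → ℕ → ℝ) (hθ : IsSign θ) (γ : ℝ) :
    |∑ k ∈ range (2^d), (γ + Dfun w θ d k) ^ p|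
      ≤ 2^d * p * |γ| * (|γ| + Asum w d) ^ (p-1) := by
  have hp1 : 1 ≤ p := hodd.pos
  have hM : 0 ≤ Asum w d := Finset.sum_nonneg (fun m _ => hw m)
  have hexp : ∀ k, (γ + Dfun w θ d k) ^ p
      = ∑ i ∈ range (p+1), Dfun w θ d k ^ i * γ ^ (p-i) * (p.choose i) := by
    intro k
    rw [add_comm, add_pow]
  calc |∑ k ∈ range (2^d), (γ + Dfun w θ d k) ^ p|
      = |∑ i ∈ range (p+1), (∑ k ∈ range (2^d), Dfun w θ d k ^ i) * γ^(p-i) * (p.choose i)| := by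
        rw [Finset.sum_congr rfl (fun k _ => hexp k), Finset.sum_comm]
        congr 1
        exact Finset.sum_congr rfl (fun i _ => by rw [← Finset.sum_mul, ← Finset.sum_mul])
    _ = |∑ i ∈ range p, (∑ k ∈ range (2^d), Dfun w θ d k ^ i) * γ^(p-i) * (p.choose i)| := by
        rw [Finset.sum_range_succ,
          (Dfun_key d w θ θ hθ hθ p).1 hodd]
        simp
    _ ≤ ∑ i ∈ range p, |(∑ k ∈ range (2^d), Dfun w θ d k ^ i) * γ^(p-i) * (p.choose i)| :=
        Finset.abs_sum_le_sum_abs _ _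
    _ ≤ ∑ i ∈ range p, (2^d * (p-1).choose i * (Asum w d)^i) * (|γ|^(p-1-i) * |γ|) * p := by
        apply Finset.sum_le_sum
        intro i hi
        have hi' : i ≤ p - 1 := by have := mem_range.mp hi; omega
        rw [abs_mul, abs_mul]
        have hsum : |∑ k ∈ range (2^d), Dfun w θ d k ^ i| ≤ 2^d * (Asum w d)^i := by
          refine le_trans (Finset.abs_sum_le_sum_abs _ _) ?_
          have : ∀ k ∈ range (2^d), |Dfun w θ d k ^ i| ≤ (Asum w d)^i := by
            intro k _
            rw [abs_pow]
            exact pow_le_pow_left₀ (abs_nonneg _) (abs_Dfun_le w hw θ hθ d k) i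
          refine le_trans (Finset.sum_le_sum this) ?_
          rw [Finset.sum_const, card_range, nsmul_eq_mul]
          push_cast
          exact le_refl _
        have hγ : |γ ^ (p-i)| = |γ|^(p-1-i) * |γ| := by
          rw [abs_pow, show p - i = (p-1-i) + 1 by omega, pow_succ]
        have hch : |(p.choose i : ℝ)| ≤ (p-1).choose i * p := by
          rw [abs_of_nonneg (by positivity)]
          calc (p.choose i : ℝ) ≤ p * (p-1).choose i := choose_le p i hi' hp1
            _ = (p-1).choose i * p := by ring
        calc |∑ k ∈ range (2^d), Dfun w θ d k ^ i| * |γ ^ (p - i)| * |(p.choose i : ℝ)|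
            ≤ (2^d * (Asum w d)^i) * (|γ|^(p-1-i) * |γ|) * ((p-1).choose i * p) := by
              apply mul_le_mul _ hch (abs_nonneg _) (by positivity)
              apply mul_le_mul hsum (le_of_eq hγ) (abs_nonneg _) (by positivity)
          _ = (2^d * (p-1).choose i * (Asum w d)^i) * (|γ|^(p-1-i) * |γ|) * p := by ring
    _ = 2^d * p * |γ| * (∑ i ∈ range p, (Asum w d)^i * |γ|^(p-1-i) * ((p-1).choose i)) := by
        rw [Finset.mul_sum]
        exact Finset.sum_congr rfl (fun i _ => by ring)
    _ = 2^d * p * |γ| * (|γ| + Asum w d) ^ (p-1) := by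
        congr 1
        rw [add_comm |γ|, add_pow]
        rw [show p - 1 + 1 = p by omega]
    _ ≤ 2^d * p * |γ| * (|γ| + Asum w d) ^ (p-1) := le_refl _


lemma main_bound (p : ℕ) (hodd : Odd p) :
    ∀ (d : ℕ) (w : ℕ → ℝ), (∀ m, 0 ≤ w m) → ∀ (θ : ℕ → ℕ → ℝ), IsSign θ →
    ∀ (a α : ℝ), |α| ≤ a → ∀ (K : ℕ), K ≤ 2^d →
    |∑ k ∈ range K, (α + Dfun w θ d k) ^ p| ≤ Bnd p d w a := by
  intro d
  induction d with
  | zero =>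
    intro w hw θ hθ a α hα K hK
    interval_cases K
    · simpa [Bnd] using pow_nonneg (le_trans (abs_nonneg α) hα) p
    · simp only [Finset.sum_range_one, Dfun, Finset.range_zero, Finset.sum_empty,
        add_zero, Bnd]
      rw [abs_pow]
      exact pow_le_pow_left₀ (abs_nonneg _) hα p
  | succ d ih =>
    intro w hw θ hθ a α hα K hK
    have ha : 0 ≤ a := le_trans (abs_nonneg α) hα
    have hw0 : 0 ≤ w 0 := hw 0
    have hw' : ∀ m, 0 ≤ w (m+1) := fun m => hw (m+1)
    have hAs : 0 ≤ Asum w (d+1) := Finset.sum_nonneg (fun m _ => hw m)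
    have hAs' : Asum w (d+1) = w 0 + Asum (fun m => w (m+1)) d := by
      unfold Asum
      rw [Finset.sum_range_succ']
      ring
    have hθL : IsSign (fun m j => θ (m+1) j) := fun m j => hθ (m+1) j
    have hθR : IsSign (fun m j => θ (m+1) (2^m + j)) := fun m j => hθ (m+1) (2^m + j)
    have habs : ∀ s : ℝ, s = 1 ∨ s = -1 → |α + w 0 * s| ≤ a + w 0 := by
      intro s hs
      rcases hs with h | h <;> rw [h] <;>
        · rw [abs_le] at hα ⊢
          constructor <;> nlinarith [hα.1, hα.2]
    have hterm_nonneg : 0 ≤ 2^d * (p:ℝ) * (a + w 0) * (a + Asum w (d+1)) ^ (p-1) := by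
      positivity
    by_cases hK2 : K ≤ 2^d
    · -- left half only
      have : ∀ k ∈ range K, (α + Dfun w θ (d+1) k) ^ p
          = ((α + w 0 * θ 0 0) + Dfun (fun m => w (m+1)) (fun m j => θ (m+1) j) d k) ^ p := by
        intro k hk
        rw [Dfun_left w θ d k (lt_of_lt_of_le (mem_range.mp hk) hK2)]
        rw [← add_assoc]
      rw [Finset.sum_congr rfl this]
      calc |∑ k ∈ range K, ((α + w 0 * θ 0 0) + Dfun (fun m => w (m+1)) (fun m j => θ (m+1) j) d k) ^ p|
          ≤ Bnd p d (fun m => w (m+1)) (a + w 0) :=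
            ih (fun m => w (m+1)) hw' _ hθL (a + w 0) (α + w 0 * θ 0 0)
              (habs (θ 0 0) (hθ 0 0)) K hK2
        _ ≤ Bnd p (d+1) w a := by
            show _ ≤ 2^d * (p:ℝ) * (a + w 0) * (a + Asum w (d+1)) ^ (p-1) + _
            linarith
    · -- full left block + partial right block
      push_neg at hK2
      have hKsplit : K = 2^d + (K - 2^d) := by omega
      have hK' : K - 2^d ≤ 2^d := by
        have : 2^(d+1) = 2^d + 2^d := by ring
        omega
      rw [hKsplit, Finset.sum_range_add]
      have hLB : ∀ k ∈ range (2^d), (α + Dfun w θ (d+1) k) ^ p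
          = ((α + w 0 * θ 0 0) + Dfun (fun m => w (m+1)) (fun m j => θ (m+1) j) d k) ^ p := by
        intro k hk
        rw [Dfun_left w θ d k (mem_range.mp hk)]; rw [← add_assoc]
      have hRB : ∀ r ∈ range (K - 2^d), (α + Dfun w θ (d+1) (2^d + r)) ^ p
          = ((α - w 0 * θ 0 0) + Dfun (fun m => w (m+1)) (fun m j => θ (m+1) (2^m + j)) d r) ^ p := by
        intro r hr
        rw [Dfun_right w θ d r (lt_of_lt_of_le (mem_range.mp hr) hK')]
        congr 1
        ring
      rw [Finset.sum_congr rfl hLB, Finset.sum_congr rfl hRB]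
      have h1 := full_block p hodd d (fun m => w (m+1)) hw' _ hθL (α + w 0 * θ 0 0)
      have h2 := ih (fun m => w (m+1)) hw' _ hθR (a + w 0) (α - w 0 * θ 0 0)
        (by
          have := habs (-(θ 0 0)) (by rcases hθ 0 0 with h | h <;> simp [h])
          rw [show α + w 0 * -(θ 0 0) = α - w 0 * θ 0 0 by ring] at this
          exact this)
        (K - 2^d) hK'
      have hfb : 2^d * (p:ℝ) * |α + w 0 * θ 0 0| * (|α + w 0 * θ 0 0| + Asum (fun m => w (m+1)) d) ^ (p-1)
          ≤ 2^d * (p:ℝ) * (a + w 0) * (a + Asum w (d+1)) ^ (p-1) := by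
        have e1 : |α + w 0 * θ 0 0| ≤ a + w 0 := habs (θ 0 0) (hθ 0 0)
        have e2 : |α + w 0 * θ 0 0| + Asum (fun m => w (m+1)) d ≤ a + Asum w (d+1) := by
          rw [hAs']
          have : 0 ≤ Asum (fun m => w (m+1)) d := Finset.sum_nonneg (fun m _ => hw' m)
          linarith
        have hA'ge : (0:ℝ) ≤ Asum (fun m => w (m+1)) d := Finset.sum_nonneg (fun m _ => hw' m)
        have e3 : (|α + w 0 * θ 0 0| + Asum (fun m => w (m+1)) d) ^ (p-1)
            ≤ (a + Asum w (d+1)) ^ (p-1) := by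
          apply pow_le_pow_left₀ (by positivity) e2
        apply mul_le_mul _ e3 (pow_nonneg (by positivity) _) (by positivity)
        apply mul_le_mul_of_nonneg_left e1 (by positivity)
      show |_ + _| ≤ 2^d * (p:ℝ) * (a + w 0) * (a + Asum w (d+1)) ^ (p-1) + Bnd p d (fun m => w (m+1)) (a + w 0)
      calc |_ + _| ≤ |∑ k ∈ range (2^d), ((α + w 0 * θ 0 0) + Dfun (fun m => w (m+1)) (fun m j => θ (m+1) j) d k) ^ p|
            + |∑ r ∈ range (K - 2^d), ((α - w 0 * θ 0 0) + Dfun (fun m => w (m+1)) (fun m j => θ (m+1) (2^m + j)) d r) ^ p| :=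
          abs_add_le _ _
        _ ≤ _ := by
          apply add_le_add (le_trans h1 hfb) h2


lemma bnd_est (p : ℕ) (hp1 : 1 ≤ p) (ρ E : ℝ) (hρ1 : 1 < ρ) (hρ2 : ρ < 2)
    (hE1 : (1/(ρ-1))^p ≤ E) (hE2 : p * (1/(ρ-1))^p * ρ + E * ρ ≤ 2*E) :
    ∀ (d : ℕ) (c a : ℝ), 0 < c → 0 ≤ a → a ≤ c * (1/(ρ-1)) →
    Bnd p d (fun m => c * ρ^m) a ≤ E * c^p * (ρ^(p-1))^d * 2^d := by
  have hρ0 : (0:ℝ) < ρ - 1 := by linarith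
  set K₁ : ℝ := 1/(ρ-1) with hK₁def
  have hK₁pos : 0 < K₁ := by positivity
  have hK₁ρ : K₁ + 1 = K₁ * ρ := by
    rw [hK₁def]
    field_simp
    ring
  intro d
  induction d with
  | zero =>
    intro c a hc ha haK
    show a ^ p ≤ E * c^p * (ρ^(p-1))^0 * 2^0
    have h1 : a ^ p ≤ (c * K₁) ^ p := pow_le_pow_left₀ ha haK p
    have h2 : (c * K₁) ^ p = c^p * K₁^p := mul_pow c K₁ p
    have h3 : c^p * K₁^p ≤ c^p * E := by
      apply mul_le_mul_of_nonneg_left hE1 (by positivity)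
    simp only [pow_zero, mul_one]
    calc a ^ p ≤ c^p * K₁^p := by rw [← h2]; exact h1
      _ ≤ c^p * E := h3
      _ = E * c^p := by ring
  | succ d ih =>
    intro c a hc ha haK
    have hcρ : 0 < c * ρ := by positivity
    have hwfun : (fun m => c * ρ^(m+1)) = (fun m => (c*ρ) * ρ^m) := by
      funext m; ring
    show 2^d * (p:ℝ) * (a + c * ρ^0) * (a + Asum (fun m => c * ρ^m) (d+1)) ^ (p-1)
        + Bnd p d (fun m => c * ρ^(m+1)) (a + c * ρ^0) ≤ _
    rw [hwfun, pow_zero, mul_one]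
    have hAsum : Asum (fun m => c * ρ^m) (d+1) = c * ((ρ^(d+1) - 1)/(ρ-1)) := by
      unfold Asum
      rw [← Finset.mul_sum, geom_sum_eq (ne_of_gt hρ1)]
    have hgeom : a + Asum (fun m => c * ρ^m) (d+1) ≤ c * K₁ * ρ^(d+1) := by
      rw [hAsum]
      have : c * ((ρ^(d+1) - 1)/(ρ-1)) = c * K₁ * ρ^(d+1) - c * K₁ := by
        rw [hK₁def]; field_simp
      rw [this]
      linarith
    have hgeom0 : 0 ≤ a + Asum (fun m => c * ρ^m) (d+1) := by
      have : 0 ≤ Asum (fun m => c * ρ^m) (d+1) :=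
        Finset.sum_nonneg (fun m _ => by positivity)
      linarith
    have hac : a + c ≤ c * K₁ * ρ := by
      calc a + c ≤ c * K₁ + c := by linarith
        _ = c * (K₁ + 1) := by ring
        _ = c * K₁ * ρ := by rw [hK₁ρ]; ring
    -- first term estimate
    have hT1 : 2^d * (p:ℝ) * (a + c) * (a + Asum (fun m => c * ρ^m) (d+1)) ^ (p-1)
        ≤ 2^d * (p:ℝ) * (c * K₁ * ρ) * (c * K₁ * ρ^(d+1)) ^ (p-1) := by
      apply mul_le_mul
      · apply mul_le_mul_of_nonneg_left hac (by positivity)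
      · exact pow_le_pow_left₀ hgeom0 hgeom _
      · exact pow_nonneg hgeom0 _
      · positivity
    have hcc : c^p = c^(p-1) * c := by rw [← pow_succ]; congr 1; omega
    have hKK : K₁^p = K₁^(p-1) * K₁ := by rw [← pow_succ]; congr 1; omega
    have hρρ : ρ^p = ρ^(p-1) * ρ := by rw [← pow_succ]; congr 1; omega
    have hT1' : 2^d * (p:ℝ) * (c * K₁ * ρ) * (c * K₁ * ρ^(d+1)) ^ (p-1)
        = ((p:ℝ) * K₁^p * ρ) * (c^p * (ρ^(p-1))^(d+1) * 2^d) := by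
      rw [mul_pow, mul_pow, pow_right_comm ρ (d+1) (p-1), hcc, hKK]
      ring
    have hT2 := ih (c*ρ) (a+c) hcρ (by linarith)
      (by calc a + c ≤ c*K₁ + c := by linarith
            _ = c*(K₁+1) := by ring
            _ = c*(K₁*ρ) := by rw [hK₁ρ]
            _ = (c*ρ)*K₁ := by ring)
    have hT2' : E*(c*ρ)^p*(ρ^(p-1))^d*2^d = (E*ρ) * (c^p*(ρ^(p-1))^(d+1)*2^d) := by
      rw [pow_succ ((ρ:ℝ)^(p-1)) d, mul_pow, hρρ]
      ring
    have hX : (0:ℝ) ≤ c^p*(ρ^(p-1))^(d+1)*2^d := by positivity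
    have hfin := mul_le_mul_of_nonneg_right hE2 hX
    have hgoal : E * c^p * (ρ^(p-1))^(d+1) * 2^(d+1)
        = 2*E * (c^p*(ρ^(p-1))^(d+1)*2^d) := by ring
    rw [hgoal]
    calc 2^d * (p:ℝ) * (a + c) * (a + Asum (fun m => c * ρ^m) (d+1)) ^ (p-1)
          + Bnd p d (fun m => (c*ρ) * ρ^m) (a + c)
        ≤ ((p:ℝ) * K₁^p * ρ) * (c^p * (ρ^(p-1))^(d+1) * 2^d)
          + (E*ρ) * (c^p*(ρ^(p-1))^(d+1)*2^d) := by
          rw [← hT1', ← hT2']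
          exact add_le_add hT1 hT2
      _ = ((p:ℝ) * K₁^p * ρ + E*ρ) * (c^p*(ρ^(p-1))^(d+1)*2^d) := by ring
      _ ≤ 2*E * (c^p*(ρ^(p-1))^(d+1)*2^d) := by
          apply mul_le_mul_of_nonneg_right _ hX
          rw [hK₁def]
          exact hE2


lemma tlTerm_dyadic_zero (H : ℝ) (θ : ℕ → ℕ → ℝ) (m n k : ℕ) (h : n ≤ m) :
    tlTerm H θ m ((k:ℝ)/2^n) = 0 := by
  unfold tlTerm fs
  rw [Finset.sum_eq_zero, mul_zero]
  intro j hj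
  have harg : (2:ℝ)^m * ((k:ℝ)/2^n) - ((j:ℤ):ℝ) = (((k * 2^(m-n) - j : ℤ)) : ℝ) := by
    have h2 : (2:ℝ)^m = 2^n * 2^(m-n) := by
      rw [← pow_add]; congr 1; omega
    push_cast
    rw [h2]
    have : (2:ℝ)^n ≠ 0 := by positivity
    field_simp
  rw [harg, e00_int, mul_zero, mul_zero]

lemma tl_incr (H : ℝ) (θ : ℕ → ℕ → ℝ) (hθ : IsSign θ) (m n k : ℕ)
    (hm : m < n) (hk : k < 2^n) :
    tlTerm H θ m (((k:ℝ)+1)/2^n) - tlTerm H θ m ((k:ℝ)/2^n)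
      = ((2:ℝ)^(-(n:ℝ)) * ((2:ℝ)^((1:ℝ)-H))^m)
          * (θ m (k / 2^(n-m)) * (1 - 2*(((k / 2^(n-m-1)) % 2 : ℕ):ℝ))) := by
  set d' := n - m with hd'def
  have hd1 : 1 ≤ d' := by omega
  have hnm : n = m + d' := by omega
  have h2d : (0:ℝ) < 2^d' := by positivity
  set j₀ := k / 2^d' with hj₀def
  set r := k % 2^d' with hrdef
  have hkdr : 2^d' * j₀ + r = k := Nat.div_add_mod k (2^d')
  have hrlt : r < 2^d' := Nat.mod_lt _ (by positivity)
  have hj₀lt : j₀ < 2^m := by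
    rw [hj₀def]
    apply Nat.div_lt_of_lt_mul
    rw [show 2^d' * 2^m = 2^n by rw [← pow_add]; congr 1; omega]
    exact hk
  -- argument simplification
  have hargs : ∀ (j : ℕ) (x : ℝ), (2:ℝ)^m * (x/2^n) - ((j:ℤ):ℝ) = x/2^d' - j := by
    intro j x
    rw [hnm, pow_add]
    push_cast
    field_simp
  -- combine into one sum
  unfold tlTerm fs
  rw [← mul_sub, ← Finset.sum_sub_distrib]
  have hsummand : ∀ j ∈ range (2^m),
      θ m j * ((2:ℝ)^(-(m:ℝ)/2) * e00 ((2:ℝ)^m * ((((k:ℝ)+1))/2^n) - ((j:ℤ):ℝ)))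
        - θ m j * ((2:ℝ)^(-(m:ℝ)/2) * e00 ((2:ℝ)^m * (((k:ℝ))/2^n) - ((j:ℤ):ℝ)))
      = (2:ℝ)^(-(m:ℝ)/2) * (θ m j *
          (e00 (((k:ℝ)+1)/2^d' - j) - e00 ((k:ℝ)/2^d' - j))) := by
    intro j hj
    rw [hargs j ((k:ℝ)+1), hargs j (k:ℝ)]
    ring
  rw [Finset.sum_congr rfl hsummand, ← Finset.mul_sum]
  -- evaluate the inner sum via single term
  have hsingle : ∑ j ∈ range (2^m), θ m j *
      (e00 (((k:ℝ)+1)/2^d' - j) - e00 ((k:ℝ)/2^d' - j))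
      = θ m j₀ * ((1 - 2*(((k / 2^(d'-1)) % 2 : ℕ):ℝ)) * (1/2^d')) := by
    rw [Finset.sum_eq_single_of_mem j₀ (Finset.mem_range.mpr hj₀lt)]
    · -- main term
      have hkr : (k:ℝ) = 2^d' * j₀ + r := by exact_mod_cast congrArg (Nat.cast (R := ℝ)) hkdr.symm
      have harg1 : (k:ℝ)/2^d' - j₀ = (r:ℝ)/2^d' := by
        rw [hkr]; field_simp; ring
      have harg2 : ((k:ℝ)+1)/2^d' - j₀ = ((r:ℝ)+1)/2^d' := by
        rw [hkr]; field_simp; ring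
      have hbit : (k / 2^(d'-1)) % 2 = r / 2^(d'-1) := by
        have hsplit : (2:ℕ)^d' = 2^(d'-1) * 2 := by
          rw [← pow_succ]; congr 1; omega
        have : k / 2^(d'-1) = 2 * j₀ + r / 2^(d'-1) := by
          rw [← hkdr, hsplit]
          rw [show 2^(d'-1) * 2 * j₀ = 2^(d'-1) * (2 * j₀) by ring]
          rw [Nat.mul_add_div (by positivity)]
        rw [this, Nat.mul_add_mod]
        apply Nat.mod_eq_of_lt
        apply Nat.div_lt_of_lt_mul
        rw [← hsplit]
        exact hrlt
      rw [harg1, harg2, hbit]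
      have hr0 : (0:ℝ) ≤ (r:ℝ)/2^d' := by positivity
      have hrmono : (r:ℝ)/2^d' ≤ ((r:ℝ)+1)/2^d' := by gcongr; linarith
      rcases Nat.lt_or_ge r (2^(d'-1)) with hcase | hcase
      · -- rising part
        have hq : r / 2^(d'-1) = 0 := Nat.div_eq_of_lt hcase
        have hpows : (2:ℝ)^(d'-1) * 2 = 2^d' := by
          rw [← pow_succ]; congr 1; omega
        have hrc : (r:ℝ) + 1 ≤ 2^(d'-1) := by exact_mod_cast hcase
        have hr1 : ((r:ℝ)+1)/2^d' ≤ 1/2 := by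
          rw [div_le_div_iff₀ h2d (by norm_num)]
          nlinarith
        rw [e00_low hr0 (le_trans hrmono hr1), e00_low (by positivity) hr1, hq]
        push_cast
        field_simp
        ring
      · -- falling part
        have hq : r / 2^(d'-1) = 1 := by
          have hsplit : (2:ℕ)^d' = 2^(d'-1) * 2 := by
            rw [← pow_succ]; congr 1; omega
          rw [hsplit] at hrlt
          apply Nat.div_eq_of_lt_le
          · simpa using hcase
          · omega
        have hpows : (2:ℝ)^(d'-1) * 2 = 2^d' := by
          rw [← pow_succ]; congr 1; omega
        have hrc : (2:ℝ)^(d'-1) ≤ (r:ℝ) := by exact_mod_cast hcase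
        have hhalf : (1:ℝ)/2 ≤ (r:ℝ)/2^d' := by
          rw [div_le_div_iff₀ (by norm_num) h2d]
          nlinarith
        have hone : ((r:ℝ)+1)/2^d' ≤ 1 := by
          rw [div_le_one h2d]
          have : (r:ℝ) + 1 ≤ 2^d' := by exact_mod_cast hrlt
          linarith
        rw [e00_high (le_trans hhalf hrmono) hone,
          e00_high hhalf (le_trans hrmono hone), hq]
        push_cast
        field_simp
        ring
    · -- other terms vanish
      intro j hj hne
      have hdd : (k:ℝ)/2^d' ≤ ((k:ℝ)+1)/2^d' := by gcongr <;> linarith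
      rcases Nat.lt_or_ge j j₀ with hlt | hge
      · have hjj : ((j:ℝ)+1) ≤ (j₀:ℝ) := by exact_mod_cast hlt
        have hkge : ((j₀:ℝ)) * 2^d' ≤ (k:ℝ) := by
          have : 2^d' * j₀ ≤ k := by omega
          calc ((j₀:ℝ)) * 2^d' = ((2^d' * j₀ : ℕ) : ℝ) := by push_cast; ring
            _ ≤ (k:ℝ) := by exact_mod_cast this
        have h1 : (1:ℝ) ≤ (k:ℝ)/2^d' - j := by
          have : (j₀:ℝ) ≤ (k:ℝ)/2^d' := (le_div_iff₀ h2d).mpr hkge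
          linarith
        have h2 : (1:ℝ) ≤ ((k:ℝ)+1)/2^d' - j := by linarith
        rw [e00_one_le h1, e00_one_le h2]
        ring
      · have hjj : (j₀:ℝ) + 1 ≤ (j:ℝ) := by
          have : j₀ + 1 ≤ j := by omega
          exact_mod_cast this
        have hkle : (k:ℝ) + 1 ≤ ((j₀:ℝ)+1) * 2^d' := by
          have : k + 1 ≤ 2^d' * (j₀ + 1) := by
            have hd : 2^d' * (j₀ + 1) = 2^d' * j₀ + 2^d' := by ring
            omega
          calc (k:ℝ) + 1 = ((k+1 : ℕ) : ℝ) := by push_cast; ring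
            _ ≤ ((2^d' * (j₀+1) : ℕ) : ℝ) := by exact_mod_cast this
            _ = ((j₀:ℝ)+1) * 2^d' := by push_cast; ring
        have h2 : ((k:ℝ)+1)/2^d' - j ≤ 0 := by
          have : ((k:ℝ)+1)/2^d' ≤ (j₀:ℝ)+1 := (div_le_iff₀ h2d).mpr hkle
          linarith
        have h1 : (k:ℝ)/2^d' - j ≤ 0 := by linarith
        rw [e00_nonpos h1, e00_nonpos h2]
        ring
  rw [hsingle]
  -- constant bookkeeping
  have hd'cast : ((d':ℕ):ℝ) = (n:ℝ) - (m:ℝ) := by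
    rw [hd'def]
    push_cast [Nat.cast_sub hm.le]
    ring
  have hpow1 : (1:ℝ)/2^d' = (2:ℝ)^(-(d':ℝ)) := by
    rw [Real.rpow_neg (by norm_num), Real.rpow_natCast]
    exact (one_div _)
  have hpow2 : ((2:ℝ)^((1:ℝ)-H))^m = (2:ℝ)^(((1:ℝ)-H)*m) := by
    rw [← Real.rpow_natCast ((2:ℝ)^((1:ℝ)-H)) m, ← Real.rpow_mul (by norm_num)]
  have hconst : (2:ℝ)^((m:ℝ)*(1/2-H)) * ((2:ℝ)^(-(m:ℝ)/2) * (1/2^d'))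
      = (2:ℝ)^(-(n:ℝ)) * ((2:ℝ)^((1:ℝ)-H))^m := by
    rw [hpow1, hpow2, ← Real.rpow_add (by norm_num), ← Real.rpow_add (by norm_num),
      ← Real.rpow_add (by norm_num)]
    congr 1
    rw [hd'cast]
    ring
  calc (2:ℝ)^((m:ℝ)*(1/2-H)) * ((2:ℝ)^(-(m:ℝ)/2)
        * (θ m j₀ * ((1 - 2*(((k / 2^(d'-1)) % 2 : ℕ):ℝ)) * (1/2^d'))))
      = ((2:ℝ)^((m:ℝ)*(1/2-H)) * ((2:ℝ)^(-(m:ℝ)/2) * (1/2^d')))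
        * (θ m j₀ * (1 - 2*(((k / 2^(d'-1)) % 2 : ℕ):ℝ))) := by ring
    _ = ((2:ℝ)^(-(n:ℝ)) * ((2:ℝ)^((1:ℝ)-H))^m)
        * (θ m j₀ * (1 - 2*(((k / 2^(d'-1)) % 2 : ℕ):ℝ))) := by rw [hconst]


end Stmt17Aux

open Stmt17Aux in
theorem stmt17 (H : ℝ) (hH : H ∈ Set.Ioo (0:ℝ) 1) (p : ℕ) (hodd : Odd p)
    (hp : (p : ℝ) = 1 / H) (x : ℝ → ℝ) (hx : MemX H x) (t : ℝ) (ht : t ∈ Set.Icc (0:ℝ) 1) :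
    Tendsto (fun n => ∑ k ∈ Finset.range (2 ^ n),
        if (k : ℝ) / 2 ^ n ≤ t then (x (((k:ℝ)+1)/2^n) - x ((k:ℝ)/2^n)) ^ p else 0)
      atTop (nhds 0) := by
  obtain ⟨hH0, hH1⟩ := hH
  obtain ⟨ht0, ht1⟩ := ht
  obtain ⟨θ, hθ, hxf⟩ := hx
  have hp1 : 1 ≤ p := hodd.pos
  have hHp : H * p = 1 := by
    rw [hp]
    field_simp
  set ρ : ℝ := (2:ℝ)^((1:ℝ)-H) with hρdef
  have hρ1 : 1 < ρ := by
    rw [hρdef]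
    apply Real.one_lt_rpow_iff_of_pos (by norm_num) |>.mpr
    left
    constructor <;> [norm_num; linarith]
  have hρ2 : ρ < 2 := by
    rw [hρdef]
    calc (2:ℝ)^((1:ℝ)-H) < (2:ℝ)^(1:ℝ) :=
        Real.rpow_lt_rpow_of_exponent_lt (by norm_num) (by linarith)
      _ = 2 := Real.rpow_one 2
  set K₁ : ℝ := 1/(ρ-1) with hK₁def
  have hρ0 : (0:ℝ) < ρ - 1 := by linarith
  have hK₁pos : 0 < K₁ := by
    rw [hK₁def]; positivity
  set E : ℝ := K₁^p + p*K₁^p*ρ/(2-ρ) with hEdef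
  have hE1 : K₁^p ≤ E := by
    rw [hEdef]
    have : 0 ≤ (p:ℝ)*K₁^p*ρ/(2-ρ) := by
      apply div_nonneg _ (by linarith)
      have := hK₁pos
      positivity
    linarith
  have hE2 : (p:ℝ) * K₁^p * ρ + E * ρ ≤ 2*E := by
    have h2ρ : 0 < 2 - ρ := by linarith
    have hkey : E * (2 - ρ) = K₁^p * (2-ρ) + (p:ℝ)*K₁^p*ρ := by
      rw [hEdef]
      field_simp
    nlinarith [pow_pos hK₁pos p]
  -- per-n machinery
  set Kn : ℕ → ℕ := fun n => min (Nat.floor (t * 2^n) + 1) (2^n) with hKndef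
  have hKle : ∀ n, Kn n ≤ 2^n := fun n => min_le_right _ _
  have hincr : ∀ (n k : ℕ), k < 2^n →
      x (((k:ℝ)+1)/2^n) - x ((k:ℝ)/2^n)
        = Dfun (fun m => (2:ℝ)^(-(n:ℝ)) * ρ^m) θ n k := by
    intro n k hk
    rw [hxf, hxf]
    have hz1 : ∀ m, m ∉ Finset.range n → tlTerm H θ m (((k:ℝ)+1)/2^n) = 0 := by
      intro m hm
      have h1 : ((k:ℝ)+1)/2^n = (((k+1:ℕ)):ℝ)/2^n := by push_cast; ring
      rw [h1]
      exact tlTerm_dyadic_zero H θ m n (k+1) (by simpa using Finset.mem_range.not.mp hm)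
    have hz2 : ∀ m, m ∉ Finset.range n → tlTerm H θ m ((k:ℝ)/2^n) = 0 := by
      intro m hm
      exact tlTerm_dyadic_zero H θ m n k (by simpa using Finset.mem_range.not.mp hm)
    rw [tsum_eq_sum hz1, tsum_eq_sum hz2, ← Finset.sum_sub_distrib]
    unfold Dfun
    apply Finset.sum_congr rfl
    intro m hm
    rw [tl_incr H θ hθ m n k (Finset.mem_range.mp hm) hk]
    rw [hρdef]
    ring
  have hsum_eq : ∀ n, ∑ k ∈ Finset.range (2 ^ n),
      (if (k : ℝ) / 2 ^ n ≤ t then (x (((k:ℝ)+1)/2^n) - x ((k:ℝ)/2^n)) ^ p else 0)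
      = ∑ k ∈ Finset.range (Kn n),
          ((0:ℝ) + Dfun (fun m => (2:ℝ)^(-(n:ℝ)) * ρ^m) θ n k) ^ p := by
    intro n
    rw [← Finset.sum_filter]
    have hfil : (Finset.range (2^n)).filter (fun k : ℕ => ((k:ℝ))/2^n ≤ t)
        = Finset.range (Kn n) := by
      apply Finset.ext
      intro k
      simp only [Finset.mem_filter, Finset.mem_range, hKndef, lt_min_iff,
        Nat.lt_succ_iff]
      constructor
      · rintro ⟨h1, h2⟩
        refine ⟨?_, h1⟩
        rw [Nat.le_floor_iff (by positivity)]
        rw [div_le_iff₀ (by positivity)] at h2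
        linarith
      · rintro ⟨h1, h2⟩
        refine ⟨h2, ?_⟩
        rw [div_le_iff₀ (by positivity)]
        have h3 := (Nat.le_floor_iff (show (0:ℝ) ≤ t * 2^n by positivity)).mp h1
        linarith
    rw [hfil]
    apply Finset.sum_congr rfl
    intro k hk
    rw [zero_add, hincr n k (lt_of_lt_of_le (Finset.mem_range.mp hk) (hKle n))]
  -- the quantitative bound
  set q : ℝ := (2:ℝ)^(H-1) with hqdef
  have hq0 : 0 ≤ q := le_of_lt (Real.rpow_pos_of_pos (by norm_num) _)
  have hq1 : q < 1 := by
    rw [hqdef]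
    exact Real.rpow_lt_one_of_one_lt_of_neg (by norm_num) (by linarith)
  have hbound : ∀ n, |∑ k ∈ Finset.range (Kn n),
      ((0:ℝ) + Dfun (fun m => (2:ℝ)^(-(n:ℝ)) * ρ^m) θ n k) ^ p| ≤ E * q^n := by
    intro n
    have hc : (0:ℝ) < (2:ℝ)^(-(n:ℝ)) := Real.rpow_pos_of_pos (by norm_num) _
    have h1 := main_bound p hodd n (fun m => (2:ℝ)^(-(n:ℝ)) * ρ^m)
      (fun m => by positivity) θ hθ 0 0 (by simp) (Kn n) (hKle n)
    have h2 := bnd_est p hp1 ρ E hρ1 hρ2 (by rw [← hK₁def]; exact hE1)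
      (by rw [← hK₁def]; exact hE2) n ((2:ℝ)^(-(n:ℝ))) 0 hc (le_refl 0)
      (by rw [← hK₁def]; positivity)
    refine le_trans h1 (le_trans h2 (le_of_eq ?_))
    -- E * c^p * (ρ^(p-1))^n * 2^n = E * q^n
    have hcp : ((2:ℝ)^(-(n:ℝ)))^p = (2:ℝ)^((-(n:ℝ))*(p:ℝ)) := by
      rw [Real.rpow_mul (by norm_num), Real.rpow_natCast]
    have hρp : (ρ^(p-1))^n = (2:ℝ)^(((1:ℝ)-H)*((p:ℝ)-1)*(n:ℝ)) := by
      rw [hρdef, ← Real.rpow_natCast ((2:ℝ)^((1:ℝ)-H)) (p-1),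
        ← Real.rpow_mul (by norm_num),
        ← Real.rpow_natCast ((2:ℝ)^(((1:ℝ)-H)*((p-1:ℕ):ℝ))) n,
        ← Real.rpow_mul (by norm_num)]
      congr 1
      have : ((p-1:ℕ):ℝ) = (p:ℝ) - 1 := by
        push_cast [Nat.cast_sub hp1]
        ring
      rw [this]
    have h2n : (2:ℝ)^n = (2:ℝ)^((n:ℝ)) := by
      rw [Real.rpow_natCast]
    have hqn : q^n = (2:ℝ)^((H-1)*(n:ℝ)) := by
      rw [hqdef, ← Real.rpow_natCast ((2:ℝ)^(H-1)) n, ← Real.rpow_mul (by norm_num)]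
    rw [hcp, hρp, h2n, hqn, mul_assoc, mul_assoc,
      ← Real.rpow_add (by norm_num), ← Real.rpow_add (by norm_num)]
    congr 2
    linear_combination (-(n:ℝ)) * hHp
  -- conclude
  have htend : Tendsto (fun n : ℕ => E * q^n) atTop (nhds 0) := by
    have := (tendsto_pow_atTop_nhds_zero_of_lt_one hq0 hq1).const_mul E
    simpa using this
  apply squeeze_zero_norm _ htend
  intro n
  rw [Real.norm_eq_abs, hsum_eq n]
  exact hbound n
end
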